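/- arXiv:2207.06123 — 16 statements merged into one kernel-verified Lean document; each statement's English description precedes it below -/
import Mathlib

section
/- Let A be a bounded linear projection on a Hilbert space H (i.e., A² = A). Then A is Hermitian (A = A*) if and only if A = A A* A. -/
open ContinuousLinearMap

/-- `X` is the Moore-Penrose inverse of `A`: the four Penrose equations. -/
def IsMPInv {H₁ H₂ : Type*} [NormedAddCommGroup H₁] [InnerProductSpace ℂ H₁]
    [NormedAddCommGroup H₂] [InnerProductSpace ℂ H₂] [CompleteSpace H₁] [CompleteSpace H₂]
    (A : H₁ →L[ℂ] H₂) (X : H₂ →L[ℂ] H₁) : Prop :=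
  A ∘L X ∘L A = A ∧ X ∘L A ∘L X = X ∧
    ContinuousLinearMap.adjoint (A ∘L X) = A ∘L X ∧
    ContinuousLinearMap.adjoint (X ∘L A) = X ∘L A

theorem stmt0 {H : Type*} [NormedAddCommGroup H] [InnerProductSpace ℂ H] [CompleteSpace H]
    (A : H →L[ℂ] H) (hA : A ∘L A = A) :
    ContinuousLinearMap.adjoint A = A ↔ A = A ∘L ContinuousLinearMap.adjoint A ∘L A := by
  set B := ContinuousLinearMap.adjoint A with hB
  have hAx : ∀ x, A (A x) = A x := fun x => by
    simpa using congrArg (fun T => T x) hA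
  constructor
  · intro h
    ext x
    simp [h, hAx]
  · intro h
    have hAd : ContinuousLinearMap.adjoint B = A := by rw [hB, adjoint_adjoint]
    have hx : ∀ x, A x = A (B (A x)) := fun x => by
      simpa using congrArg (fun T => T x) h
    have hB2 : B ∘L B = B := by rw [hB, ← adjoint_comp, hA]
    have hBx : ∀ x, B (B x) = B x := fun x => by
      simpa using congrArg (fun T => T x) hB2
    set N : H →L[ℂ] H := A - A ∘L B with hN
    have hNadj : ContinuousLinearMap.adjoint N = B - A ∘L B := by
      rw [hN, map_sub, adjoint_comp, hAd, ← hB]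
    have hNN : N ∘L ContinuousLinearMap.adjoint N = 0 := by
      rw [hNadj, hN]
      ext x
      simp [map_sub, hAx, hBx, ← hx]
    have hNzero : N = 0 := by
      have hadj0 : ContinuousLinearMap.adjoint N = 0 := by
        ext x
        have h2 : N (ContinuousLinearMap.adjoint N x) = 0 := by
          simpa using congrArg (fun T => T x) hNN
        have h3 : (inner ℂ (ContinuousLinearMap.adjoint N x)
            (ContinuousLinearMap.adjoint N x) : ℂ) = 0 := by
          rw [adjoint_inner_left, h2, inner_zero_right]
        simpa using inner_self_eq_zero.mp h3
      calc N = ContinuousLinearMap.adjoint (ContinuousLinearMap.adjoint N) := by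
            rw [adjoint_adjoint]
        _ = 0 := by rw [hadj0, map_zero]
    have hAAB : A = A ∘L B := sub_eq_zero.mp hNzero
    calc ContinuousLinearMap.adjoint A
        = ContinuousLinearMap.adjoint (A ∘L B) := by rw [← hAAB]
      _ = A ∘L B := by rw [adjoint_comp, hAd, ← hB]
      _ = A := hAAB.symm
end

section
/- Let A be a positive semi-definite bounded operator on a Hilbert space H such that Aᵐ = Aⁿ for some natural numbers m ≠ n (both at least 1). Then A² = A. -/
open ContinuousLinearMap

/-- A nonnegative real with `x ^ m = x ^ n`, `m ≠ n`, satisfies `x ^ 2 = x`. -/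
lemma aux_pow_real {x : ℝ} (hx : 0 ≤ x) {m n : ℕ} (hm : 1 ≤ m) (hn : 1 ≤ n)
    (hmn : m ≠ n) (hxe : x ^ m = x ^ n) : x ^ 2 = x := by
  rcases eq_or_lt_of_le hx with hx0 | hx0
  · simp [← hx0]
  wlog hlt : m < n generalizing m n
  · exact this hn hm (Ne.symm hmn) hxe.symm (by omega)
  have h1 : x ^ (n - m) = 1 := by
    have hxm : x ^ m ≠ 0 := pow_ne_zero m hx0.ne'
    have : x ^ m * x ^ (n - m) = x ^ m * 1 := by
      rw [mul_one, ← pow_add]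
      rw [hxe]
      congr 1
      omega
    exact mul_left_cancel₀ hxm this
  have hx1 : x = 1 := by
    have hk : n - m ≠ 0 := by omega
    rcases lt_trichotomy x 1 with hlt1 | heq1 | hgt1
    · have := pow_lt_one₀ hx hlt1 hk
      linarith
    · exact heq1
    · have := one_lt_pow₀ hgt1 hk
      linarith
  simp [hx1]

open scoped ComplexOrder in
theorem stmt1 {H : Type*} [NormedAddCommGroup H] [InnerProductSpace ℂ H] [CompleteSpace H]
    (A : H →L[ℂ] H)
    (hpos : ∀ x : H, 0 ≤ (inner ℂ (A x) x : ℂ))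
    (m n : ℕ) (hm : 1 ≤ m) (hn : 1 ≤ n) (hmn : m ≠ n) (h : A ^ m = A ^ n) :
    A ^ 2 = A := by
  cases subsingleton_or_nontrivial H with
  | inl hs => exact Subsingleton.elim _ _
  | inr hnt =>
  have hP : A.IsPositive := by
    rw [ContinuousLinearMap.isPositive_iff_complex]
    intro x
    have := hpos x
    rw [Complex.le_def] at this
    constructor
    · apply Complex.ext <;> simp [this.2.symm]
    · simpa using this.1
  have hsa : IsSelfAdjoint A := hP.isSelfAdjoint
  have hspec : ∀ x ∈ spectrum ℝ A, 0 ≤ x := by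
    have := hP.spectrumRestricts
    rw [SpectrumRestricts.nnreal_iff] at this
    exact this
  -- spectrum elements satisfy x^m = x^n
  have hkey : ∀ x ∈ spectrum ℝ A, x ^ 2 = x := by
    intro x hx
    have hxC : (x : ℂ) ∈ spectrum ℂ A := spectrum.algebraMap_mem ℂ hx
    have hp : Polynomial.aeval A ((Polynomial.X : Polynomial ℂ) ^ m - Polynomial.X ^ n) = 0 := by
      simp [h]
    have hmem : ((x : ℂ) ^ m - (x : ℂ) ^ n) ∈ spectrum ℂ
        (Polynomial.aeval A ((Polynomial.X : Polynomial ℂ) ^ m - Polynomial.X ^ n)) := by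
      apply spectrum.subset_polynomial_aeval
      exact ⟨(x : ℂ), hxC, by simp⟩
    rw [hp, spectrum.zero_eq] at hmem
    have hxe : (x : ℂ) ^ m = (x : ℂ) ^ n := by
      have := Set.mem_singleton_iff.mp hmem
      linear_combination this
    have hxe' : x ^ m = x ^ n := by exact_mod_cast hxe
    exact aux_pow_real (hspec x hx) hm hn hmn hxe'
  calc A ^ 2 = cfc (fun y : ℝ => y ^ 2) A := (cfc_pow_id A 2 hsa).symm
    _ = cfc (fun y : ℝ => y) A := cfc_congr hkey
    _ = A := cfc_id ℝ A hsa
end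

section
/- Let A and B be orthogonal projections on a Hilbert space H and m > n ≥ 1 natural numbers. If (ABA)ᵐ = (ABA)ⁿ, then AB = BA. -/
open ContinuousLinearMap

theorem stmt2 {H : Type*} [NormedAddCommGroup H] [InnerProductSpace ℂ H] [CompleteSpace H]
    (A B : H →L[ℂ] H)
    (hA : A ∘L A = A) (hA' : ContinuousLinearMap.adjoint A = A)
    (hB : B ∘L B = B) (hB' : ContinuousLinearMap.adjoint B = B)
    (m n : ℕ) (hn : 1 ≤ n) (hmn : n < m)
    (h : (A ∘L B ∘L A) ^ m = (A ∘L B ∘L A) ^ n) :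
    A ∘L B = B ∘L A := by
  have hcomp : ∀ X Y : H →L[ℂ] H, X ∘L Y = X * Y := fun _ _ => rfl
  rw [hcomp] at hA hB h ⊢
  rw [hcomp] at h
  have hsA : star A = A := by rw [star_eq_adjoint, hA']
  have hsB : star B = B := by rw [star_eq_adjoint, hB']
  set T := A * B * A with hT
  have h' : T ^ m = T ^ n := by rw [hT, mul_assoc]; exact h
  -- T is positive
  have e0 : (A * B) * (B * A) = T := by
    rw [mul_assoc A B (B * A), ← mul_assoc B B A, hB, ← mul_assoc]
  have hTpos : 0 ≤ T := by
    have : T = star (B * A) * (B * A) := by rw [star_mul, hsA, hsB, e0]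
    rw [this]
    exact star_mul_self_nonneg _
  have hsa : IsSelfAdjoint T := .of_nonneg hTpos
  -- spectral argument: T is idempotent
  have heq : (spectrum ℝ T).EqOn (fun x : ℝ => x ^ m) (fun x => x ^ n) := by
    rw [← cfc_eq_cfc_iff_eqOn (a := T), cfc_pow_id T m, cfc_pow_id T n]
    exact h'
  have hT2 : T * T = T := by
    have key : (spectrum ℝ T).EqOn (fun x : ℝ => x ^ 2) (fun x => x) := by
      intro x hx
      have hx0 : (0:ℝ) ≤ x := spectrum_nonneg_of_nonneg hTpos hx
      have hxe : x ^ m = x ^ n := heq hx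
      have : x = 0 ∨ x = 1 := by
        rcases eq_or_lt_of_le hx0 with h0 | h0
        · exact Or.inl h0.symm
        · refine Or.inr (by_contra fun hne => ?_)
          rcases lt_or_gt_of_ne hne with h1 | h1
          · exact (pow_lt_pow_right_of_lt_one₀ h0 h1 hmn).ne hxe
          · exact (pow_lt_pow_right₀ h1 hmn).ne' hxe
      rcases this with rfl | rfl <;> norm_num
    calc T * T = T ^ 2 := (sq T).symm
      _ = cfc (fun x : ℝ => x ^ 2) T := (cfc_pow_id T 2).symm
      _ = cfc (fun x : ℝ => x) T := cfc_congr key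
      _ = T := cfc_id ℝ T
  -- algebraic identities
  have hAT : A * T = T := by rw [hT, ← mul_assoc, ← mul_assoc, hA]
  have e1 : T * T = (A * B) * T := by
    nth_rewrite 1 [hT]; rw [mul_assoc, hAT]
  have e2 : T * (B * A) = (A * B) * T := by
    nth_rewrite 1 [hT]; rw [mul_assoc, ← mul_assoc A B A, ← hT]
  -- (BA - T)* (BA - T) = 0, so BA = T
  have hBA : B * A = T := by
    have key : star (B * A - T) * (B * A - T) = 0 := by
      have hsT : star T = T := hsa
      calc star (B * A - T) * (B * A - T)
          = (A * B - T) * (B * A - T) := by rw [star_sub, star_mul, hsA, hsB, hsT]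
        _ = (A * B) * (B * A) - (A * B) * T - T * (B * A) + T * T := by noncomm_ring
        _ = T - T * T - T * T + T * T := by rw [e0, ← e1, e2, ← e1]
        _ = 0 := by rw [hT2]; abel
    have := (CStarRing.star_mul_self_eq_zero_iff _).mp key
    exact sub_eq_zero.mp this
  calc A * B = star (B * A) := by rw [star_mul, hsA, hsB]
    _ = star T := by rw [hBA]
    _ = T := hsa
    _ = B * A := hBA.symm
end

section
/- Let A and B be orthogonal projections on a Hilbert space H and m > n ≥ 1 natural numbers. If (AB)ᵐ = (AB)ⁿ, then AB = BA. -/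
open ContinuousLinearMap

theorem stmt3 {H : Type*} [NormedAddCommGroup H] [InnerProductSpace ℂ H] [CompleteSpace H]
    (A B : H →L[ℂ] H)
    (hA : A ∘L A = A) (hA' : ContinuousLinearMap.adjoint A = A)
    (hB : B ∘L B = B) (hB' : ContinuousLinearMap.adjoint B = B)
    (m n : ℕ) (hn : 1 ≤ n) (hmn : n < m)
    (h : (A ∘L B) ^ m = (A ∘L B) ^ n) :
    A ∘L B = B ∘L A := by
  have hA2 : A * A = A := hA
  have hB2 : B * B = B := hB
  have hAs : star A = A := by rw [star_eq_adjoint, hA']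
  have hBs : star B = B := by rw [star_eq_adjoint, hB']
  set C : H →L[ℂ] H := A * B * A with hCdef
  have hCs : star C = C := by
    simp [hCdef, star_mul, hAs, hBs, mul_assoc]
  have hCpos : (0 : H →L[ℂ] H) ≤ C := by
    have e : (A * B) * star (A * B) = C := by
      rw [star_mul, hAs, hBs, hCdef]
      have : A * B * (B * A) = A * (B * B) * A := by noncomm_ring
      rw [this, hB2]
    rw [← e]
    exact mul_star_self_nonneg _
  have hCk : ∀ k, C ^ (k + 1) = (A * B) ^ (k + 1) * A := by
    intro k
    induction k with
    | zero => simp [hCdef, pow_succ]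
    | succ k ih =>
      rw [pow_succ, ih, hCdef, pow_succ]
      calc (A * B) ^ (k + 1) * A * (A * B * A)
          = (A * B) ^ (k + 1) * (A * A) * B * A := by noncomm_ring
        _ = (A * B) ^ (k + 1) * (A * B) * A := by rw [hA2]; noncomm_ring
  have hCmn : C ^ m = C ^ n := by
    obtain ⟨m', rfl⟩ := Nat.exists_eq_add_of_le (Nat.one_le_of_lt hmn) -- m = 1 + m'
    obtain ⟨n', rfl⟩ := Nat.exists_eq_add_of_le hn
    rw [add_comm 1 m', add_comm 1 n', hCk, hCk]
    have h' : (A * B) ^ (m' + 1) = (A * B) ^ (n' + 1) := by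
      rw [add_comm m' 1, add_comm n' 1]; exact h
    rw [h']
  have hC2 : C ^ 2 = C := by
    have hsa : IsSelfAdjoint C := hCs
    have hspec : ∀ x ∈ spectrum ℝ C, x ^ m = x ^ n := by
      have := cfc_eq_cfc_iff_eqOn (a := C) (f := fun x : ℝ => x ^ m) (g := fun x : ℝ => x ^ n)
      rw [cfc_pow_id (R := ℝ) C, cfc_pow_id (R := ℝ) C] at this
      exact this.mp hCmn
    have hspec01 : ∀ x ∈ spectrum ℝ C, x ^ 2 = x := by
      intro x hx
      have hx0 : 0 ≤ x := spectrum_nonneg_of_nonneg hCpos hx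
      have hxm := hspec x hx
      rcases eq_or_lt_of_le hx0 with h0 | h0
      · simp [← h0]
      · have : x ^ (m - n) * x ^ n = 1 * x ^ n := by
          rw [← pow_add, one_mul, Nat.sub_add_cancel hmn.le, hxm]
        have hx1 : x ^ (m - n) = 1 :=
          mul_right_cancel₀ (pow_ne_zero _ h0.ne') this
        have : x = 1 := by
          rcases (pow_eq_one_iff_cases.mp hx1) with h | h | h
          · omega
          · exact h
          · exfalso; nlinarith [h.1]
        simp [this]
    calc C ^ 2 = cfc (fun x : ℝ => x ^ 2) C := by rw [cfc_pow_id (R := ℝ) C]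
      _ = cfc (fun x : ℝ => x) C := cfc_congr hspec01
      _ = C := cfc_id ℝ C
  have key : (A * B - C) * star (A * B - C) = 0 := by
    have : (A * B - C) * star (A * B - C)
        = A * B * (B * A) - A * B * C - C * (B * A) + C * C := by
      rw [star_sub, star_mul, hAs, hBs, hCs]; noncomm_ring
    rw [this]
    have e1 : A * B * (B * A) = C := by
      calc A * B * (B * A) = A * (B * B) * A := by noncomm_ring
        _ = C := by rw [hB2]
    have e2 : A * B * C = C * C := by
      rw [hCdef]
      calc A * B * (A * B * A) = A * B * A * B * A := by noncomm_ring
        _ = A * B * (A * A) * B * A := by rw [hA2]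
        _ = A * B * A * (A * B * A) := by noncomm_ring
    have e3 : C * (B * A) = C * C := by
      rw [hCdef]
      calc A * B * A * (B * A) = A * B * A * B * A := by noncomm_ring
        _ = A * B * (A * A) * B * A := by rw [hA2]
        _ = A * B * A * (A * B * A) := by noncomm_ring
    have e4 : C * C = C := by rw [← pow_two]; exact hC2
    rw [e1, e2, e3, e4]; abel
  have hABC : A * B = C := by
    have := (CStarRing.mul_star_self_eq_zero_iff (A * B - C)).mp key
    linear_combination (norm := abel) this
  have : star (A * B) = A * B := by rw [hABC, hCs]
  rw [star_mul, hAs, hBs] at this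
  exact this.symm
end

section
/- Let A ∈ B(H₂, H₃) and B ∈ B(H₁, H₂) have closed ranges and suppose AB has closed range. Then A B B† A† A B = A B if and only if B† A† A B B† A† = B† A†. -/
open ContinuousLinearMap

set_option maxHeartbeats 2000000 in
theorem stmt5 {H₁ H₂ H₃ : Type*}
    [NormedAddCommGroup H₁] [InnerProductSpace ℂ H₁] [CompleteSpace H₁]
    [NormedAddCommGroup H₂] [InnerProductSpace ℂ H₂] [CompleteSpace H₂]
    [NormedAddCommGroup H₃] [InnerProductSpace ℂ H₃] [CompleteSpace H₃]
    (A : H₂ →L[ℂ] H₃) (B : H₁ →L[ℂ] H₂)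
    (Ad : H₃ →L[ℂ] H₂) (Bd : H₂ →L[ℂ] H₁) (ABd : H₃ →L[ℂ] H₁)
    (hAcl : IsClosed (LinearMap.range (A : H₂ →ₗ[ℂ] H₃) : Set H₃))
    (hBcl : IsClosed (LinearMap.range (B : H₁ →ₗ[ℂ] H₂) : Set H₂))
    (hABcl : IsClosed (LinearMap.range ((A ∘L B : H₁ →L[ℂ] H₃) : H₁ →ₗ[ℂ] H₃) : Set H₃))
    (hA : IsMPInv A Ad) (hB : IsMPInv B Bd) (hAB : IsMPInv (A ∘L B) ABd) :
    A ∘L B ∘L Bd ∘L Ad ∘L A ∘L B = A ∘L B ↔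
      Bd ∘L Ad ∘L A ∘L B ∘L Bd ∘L Ad = Bd ∘L Ad := by
  obtain ⟨a1, a2, a3, a4⟩ := hA
  obtain ⟨b1, b2, b3, b4⟩ := hB
  have pa1 : ∀ x, A (Ad (A x)) = A x := fun x => by
    have := congrArg (fun f => f x) a1; simpa using this
  have pa2 : ∀ x, Ad (A (Ad x)) = Ad x := fun x => by
    have := congrArg (fun f => f x) a2; simpa using this
  have pb1 : ∀ x, B (Bd (B x)) = B x := fun x => by
    have := congrArg (fun f => f x) b1; simpa using this
  have pb2 : ∀ x, Bd (B (Bd x)) = Bd x := fun x => by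
    have := congrArg (fun f => f x) b2; simpa using this
  rw [adjoint_comp] at a4 b3
  have p4 : ∀ y, adjoint A (adjoint Ad y) = Ad (A y) := fun y => by
    have := congrArg (fun f => f y) a4; simpa using this
  have pb3 : ∀ y, adjoint Bd (adjoint B y) = B (Bd y) := fun y => by
    have := congrArg (fun f => f y) b3; simpa using this
  have pI : ∀ z, Bd (adjoint Bd (adjoint B z)) = Bd z := fun z =>
    (congrArg Bd (pb3 z)).trans (pb2 z)
  have pII : ∀ x, adjoint A (adjoint Ad (Ad x)) = Ad x := fun x =>
    (p4 (Ad x)).trans (pa2 x)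
  have pIII : ∀ w, A (adjoint A (adjoint Ad w)) = A w := fun w =>
    (congrArg A (p4 w)).trans (pa1 w)
  have pIV : ∀ w, adjoint Bd (adjoint B (B w)) = B w := fun w =>
    (pb3 (B w)).trans (pb1 w)
  constructor
  · intro h
    have hstar := congrArg ContinuousLinearMap.adjoint h
    simp only [adjoint_comp] at hstar
    have ph : ∀ y, adjoint B (adjoint A (adjoint Ad (adjoint Bd (adjoint B (adjoint A y)))))
        = adjoint B (adjoint A y) := fun y => by
      have := congrArg (fun f => f y) hstar; simpa using this
    ext x
    simp only [comp_apply]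
    calc Bd (Ad (A (B (Bd (Ad x)))))
        = Bd (Ad (A (B (Bd (adjoint A (adjoint Ad (Ad x))))))) :=
          congrArg (fun z => Bd (Ad (A (B (Bd z))))) (pII x).symm
      _ = Bd (adjoint Bd (adjoint B (Ad (A (B (Bd (adjoint A (adjoint Ad (Ad x))))))))) :=
          (pI _).symm
      _ = Bd (adjoint Bd (adjoint B (adjoint A (adjoint Ad
            (B (Bd (adjoint A (adjoint Ad (Ad x))))))))) :=
          congrArg (fun z => Bd (adjoint Bd (adjoint B z))) (p4 _).symm
      _ = Bd (adjoint Bd (adjoint B (adjoint A (adjoint Ad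
            (adjoint Bd (adjoint B (adjoint A (adjoint Ad (Ad x))))))))) :=
          congrArg (fun z => Bd (adjoint Bd (adjoint B (adjoint A (adjoint Ad z)))))
            (pb3 _).symm
      _ = Bd (adjoint Bd (adjoint B (adjoint A (adjoint Ad (Ad x))))) :=
          congrArg (fun z => Bd (adjoint Bd z)) (ph (adjoint Ad (Ad x)))
      _ = Bd (adjoint Bd (adjoint B (Ad x))) :=
          congrArg (fun z => Bd (adjoint Bd (adjoint B z))) (pII x)
      _ = Bd (Ad x) := pI _
  · intro h
    have hstar := congrArg ContinuousLinearMap.adjoint h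
    simp only [adjoint_comp] at hstar
    have ph : ∀ y, adjoint Ad (adjoint Bd (adjoint B (adjoint A (adjoint Ad (adjoint Bd y)))))
        = adjoint Ad (adjoint Bd y) := fun y => by
      have := congrArg (fun f => f y) hstar; simpa using this
    ext x
    simp only [comp_apply]
    calc A (B (Bd (Ad (A (B x)))))
        = A (B (Bd (Ad (A (adjoint Bd (adjoint B (B x))))))) :=
          congrArg (fun z => A (B (Bd (Ad (A z))))) (pIV x).symm
      _ = A (adjoint A (adjoint Ad (B (Bd (Ad (A (adjoint Bd (adjoint B (B x))))))))) :=
          (pIII _).symm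
      _ = A (adjoint A (adjoint Ad (adjoint Bd (adjoint B
            (Ad (A (adjoint Bd (adjoint B (B x))))))))) :=
          congrArg (fun z => A (adjoint A (adjoint Ad z))) (pb3 _).symm
      _ = A (adjoint A (adjoint Ad (adjoint Bd (adjoint B
            (adjoint A (adjoint Ad (adjoint Bd (adjoint B (B x))))))))) :=
          congrArg (fun z => A (adjoint A (adjoint Ad (adjoint Bd (adjoint B z)))))
            (p4 _).symm
      _ = A (adjoint A (adjoint Ad (adjoint Bd (adjoint B (B x))))) :=
          congrArg (fun z => A (adjoint A z)) (ph (adjoint B (B x)))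
      _ = A (adjoint A (adjoint Ad (B x))) :=
          congrArg (fun z => A (adjoint A (adjoint Ad z))) (pIV x)
      _ = A (B x) := pIII _
end

section
/- Let A ∈ B(H₂, H₃) and B ∈ B(H₁, H₂) have closed ranges and suppose AB has closed range. Then A B B† A† A B = A B if and only if A† A B B† = B B† A† A. -/
open ContinuousLinearMap

/-- If `T T* = 0` then `T = 0`. -/
lemma aux_comp_adjoint_eq_zero {H K : Type*}
    [NormedAddCommGroup H] [InnerProductSpace ℂ H] [CompleteSpace H]
    [NormedAddCommGroup K] [InnerProductSpace ℂ K] [CompleteSpace K]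
    (T : H →L[ℂ] K) (h : T ∘L ContinuousLinearMap.adjoint T = 0) : T = 0 := by
  have hadj : ContinuousLinearMap.adjoint T = 0 := by
    ext x
    have h1 : inner (𝕜 := ℂ) (ContinuousLinearMap.adjoint T x)
        (ContinuousLinearMap.adjoint T x) = 0 := by
      rw [ContinuousLinearMap.adjoint_inner_left]
      have hTx : T (ContinuousLinearMap.adjoint T x) = 0 := by
        have := congrArg (fun f : K →L[ℂ] K => f x) h
        simpa [ContinuousLinearMap.comp_apply] using this
      simp [hTx]
    simpa using inner_self_eq_zero.mp h1
  have : T = ContinuousLinearMap.adjoint (ContinuousLinearMap.adjoint T) :=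
    (ContinuousLinearMap.adjoint_adjoint T).symm
  rw [this, hadj]
  simp

theorem stmt6 {H₁ H₂ H₃ : Type*}
    [NormedAddCommGroup H₁] [InnerProductSpace ℂ H₁] [CompleteSpace H₁]
    [NormedAddCommGroup H₂] [InnerProductSpace ℂ H₂] [CompleteSpace H₂]
    [NormedAddCommGroup H₃] [InnerProductSpace ℂ H₃] [CompleteSpace H₃]
    (A : H₂ →L[ℂ] H₃) (B : H₁ →L[ℂ] H₂)
    (Ad : H₃ →L[ℂ] H₂) (Bd : H₂ →L[ℂ] H₁) (ABd : H₃ →L[ℂ] H₁)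
    (hAcl : IsClosed (LinearMap.range (A : H₂ →ₗ[ℂ] H₃) : Set H₃))
    (hBcl : IsClosed (LinearMap.range (B : H₁ →ₗ[ℂ] H₂) : Set H₂))
    (hABcl : IsClosed (LinearMap.range (A ∘L B : H₁ →ₗ[ℂ] H₃) : Set H₃))
    (hA : IsMPInv A Ad) (hB : IsMPInv B Bd) (hAB : IsMPInv (A ∘L B) ABd) :
    A ∘L B ∘L Bd ∘L Ad ∘L A ∘L B = A ∘L B ↔
      Ad ∘L A ∘L B ∘L Bd = B ∘L Bd ∘L Ad ∘L A := by
  obtain ⟨hA1, hA2, hA3, hA4⟩ := hA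
  obtain ⟨hB1, hB2, hB3, hB4⟩ := hB
  -- pointwise versions
  have hA1' : ∀ x, A (Ad (A x)) = A x := fun x => by
    have := congrArg (fun f : H₂ →L[ℂ] H₃ => f x) hA1
    simpa [ContinuousLinearMap.comp_apply] using this
  have hB1' : ∀ x, B (Bd (B x)) = B x := fun x => by
    have := congrArg (fun f : H₁ →L[ℂ] H₂ => f x) hB1
    simpa [ContinuousLinearMap.comp_apply] using this
  -- opaque P = A†A, Q = BB†
  obtain ⟨P, hPdef⟩ : ∃ P : H₂ →L[ℂ] H₂, P = Ad ∘L A := ⟨_, rfl⟩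
  obtain ⟨Q, hQdef⟩ : ∃ Q : H₂ →L[ℂ] H₂, Q = B ∘L Bd := ⟨_, rfl⟩
  have hP_adj : ContinuousLinearMap.adjoint P = P := by rw [hPdef]; exact hA4
  have hQ_adj : ContinuousLinearMap.adjoint Q = Q := by rw [hQdef]; exact hB3
  have hP' : ∀ x, P x = Ad (A x) := fun x => by rw [hPdef]; rfl
  have hQ' : ∀ x, Q x = B (Bd x) := fun x => by rw [hQdef]; rfl
  have hadj1 : ContinuousLinearMap.adjoint (P ∘L Q) = Q ∘L P := by
    rw [ContinuousLinearMap.adjoint_comp, hP_adj, hQ_adj]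
  have hadj2 : ContinuousLinearMap.adjoint (P ∘L (Q ∘L P)) = (P ∘L Q) ∘L P := by
    rw [ContinuousLinearMap.adjoint_comp, ContinuousLinearMap.adjoint_comp,
      hP_adj, hQ_adj]
  constructor
  · intro h
    have h' : ∀ x, A (B (Bd (Ad (A (B x))))) = A (B x) := fun x => by
      have := congrArg (fun f : H₁ →L[ℂ] H₃ => f x) h
      simpa [ContinuousLinearMap.comp_apply] using this
    have hPQPQ : ∀ x : H₂, P (Q (P (Q x))) = P (Q x) := fun x => by
      simp only [hP', hQ']
      exact congrArg Ad (h' (Bd x))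
    have hPP : ∀ x : H₂, P (P x) = P x := fun x => by
      simp only [hP']; exact congrArg Ad (hA1' x)
    have hQQ : ∀ x : H₂, Q (Q x) = Q x := fun x => by
      simp only [hQ']; exact hB1' (Bd x)
    have hT : P ∘L Q - P ∘L (Q ∘L P) = 0 := by
      apply aux_comp_adjoint_eq_zero
      rw [map_sub, hadj1, hadj2]
      ext x
      simp only [ContinuousLinearMap.comp_apply, ContinuousLinearMap.sub_apply,
        ContinuousLinearMap.zero_apply, map_sub]
      have e1 : P (Q (Q (P x))) = P (Q (P x)) := by rw [hQQ]
      have e2 : P (Q (P (Q (P x)))) = P (Q (P x)) := hPQPQ (P x)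
      have e3 : P (Q (P (P (Q (P x))))) = P (Q (P x)) := by
        rw [hPP]; exact hPQPQ (P x)
      rw [e1, e2, e3]
      abel
    have hPQ_eq : P ∘L Q = P ∘L (Q ∘L P) := sub_eq_zero.mp hT
    have hcomm : Q ∘L P = P ∘L Q := by
      calc Q ∘L P = ContinuousLinearMap.adjoint (P ∘L Q) := hadj1.symm
        _ = ContinuousLinearMap.adjoint (P ∘L (Q ∘L P)) := by rw [← hPQ_eq]
        _ = (P ∘L Q) ∘L P := hadj2
        _ = P ∘L (Q ∘L P) := ContinuousLinearMap.comp_assoc _ _ _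
        _ = P ∘L Q := hPQ_eq.symm
    have hcomm' : ∀ x, B (Bd (Ad (A x))) = Ad (A (B (Bd x))) := fun x => by
      have := congrArg (fun f : H₂ →L[ℂ] H₂ => f x) hcomm
      simpa [ContinuousLinearMap.comp_apply, hP', hQ'] using this
    ext x
    simp only [ContinuousLinearMap.comp_apply]
    exact (hcomm' x).symm
  · intro h
    have hcomm' : ∀ x, Ad (A (B (Bd x))) = B (Bd (Ad (A x))) := fun x => by
      have := congrArg (fun f : H₂ →L[ℂ] H₂ => f x) h
      simpa [ContinuousLinearMap.comp_apply] using this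
    ext x
    simp only [ContinuousLinearMap.comp_apply]
    calc A (B (Bd (Ad (A (B x)))))
        = A (Ad (A (B (Bd (B x))))) := by rw [← hcomm' (B x)]
      _ = A (Ad (A (B x))) := by rw [hB1' x]
      _ = A (B x) := hA1' (B x)
end

section
/- Let A ∈ B(H₂, H₃) and B ∈ B(H₁, H₂) have closed ranges and suppose AB has closed range. If B B† A† A is an idempotent (i.e., (BB†A†A)² = BB†A†A), then A† A B B† = B B† A† A. -/
open ContinuousLinearMap

lemma my_zero_of_adjoint_mul_self {H : Type*} [NormedAddCommGroup H] [InnerProductSpace ℂ H]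
    [CompleteSpace H] (T : H →L[ℂ] H)
    (h : ContinuousLinearMap.adjoint T * T = 0) : T = 0 := by
  ext x
  have h1 : ContinuousLinearMap.adjoint T (T x) = 0 := by
    have := congrFun (congrArg DFunLike.coe h) x
    simpa using this
  have h2 : (inner ℂ (T x) (T x) : ℂ) = 0 := by
    rw [← ContinuousLinearMap.adjoint_inner_left, h1, inner_zero_left]
  simpa using inner_self_eq_zero.mp h2

lemma my_adjoint_mul {H : Type*} [NormedAddCommGroup H] [InnerProductSpace ℂ H]
    [CompleteSpace H] (a b : H →L[ℂ] H) :
    ContinuousLinearMap.adjoint (a * b)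
      = ContinuousLinearMap.adjoint b * ContinuousLinearMap.adjoint a :=
  ContinuousLinearMap.adjoint_comp a b

lemma my_proj_comm {H : Type*} [NormedAddCommGroup H] [InnerProductSpace ℂ H]
    [CompleteSpace H] (P Q : H →L[ℂ] H)
    (hP2 : P * P = P) (hPs : ContinuousLinearMap.adjoint P = P)
    (hQ2 : Q * Q = Q) (hQs : ContinuousLinearMap.adjoint Q = Q)
    (h : (P * Q) * (P * Q) = P * Q) : Q * P = P * Q := by
  have h' : P * (Q * (P * Q)) = P * Q := by rw [← mul_assoc, h]
  -- E := P * Q, F := Q * (P * Q)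
  have hEs : ContinuousLinearMap.adjoint (P * Q) = Q * P := by
    rw [my_adjoint_mul, hPs, hQs]
  have hEF : (Q * P) * (P * Q) = Q * (P * Q) := by
    rw [mul_assoc, ← mul_assoc P P Q, hP2]
  have hPQQ : (P * Q) * Q = P * Q := by rw [mul_assoc, hQ2]
  have hF2 : (Q * (P * Q)) * (Q * (P * Q)) = Q * (P * Q) := by
    rw [mul_assoc Q (P * Q) (Q * (P * Q)), ← mul_assoc (P * Q) Q (P * Q), hPQQ, h]
  have hAF : (Q * P) * (Q * (P * Q)) = Q * (P * Q) := by
    rw [mul_assoc Q P (Q * (P * Q)), h']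
  have hFE : (Q * (P * Q)) * (P * Q) = Q * (P * Q) := by
    rw [mul_assoc, h]
  have hFs : ContinuousLinearMap.adjoint (Q * (P * Q)) = Q * (P * Q) := by
    rw [my_adjoint_mul, my_adjoint_mul, hPs, hQs, mul_assoc]
  have hzero : ContinuousLinearMap.adjoint (P * Q - Q * (P * Q)) * (P * Q - Q * (P * Q)) = 0 := by
    rw [map_sub, hEs, hFs, sub_mul, mul_sub, mul_sub, hEF, hAF, hFE, hF2]
    abel
  have hEF0 : P * Q - Q * (P * Q) = 0 := my_zero_of_adjoint_mul_self _ hzero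
  have hEeqF : P * Q = Q * (P * Q) := sub_eq_zero.mp hEF0
  calc Q * P = ContinuousLinearMap.adjoint (P * Q) := hEs.symm
    _ = ContinuousLinearMap.adjoint (Q * (P * Q)) := by rw [← hEeqF]
    _ = Q * (P * Q) := hFs
    _ = P * Q := hEeqF.symm

theorem stmt7 {H₁ H₂ H₃ : Type*}
    [NormedAddCommGroup H₁] [InnerProductSpace ℂ H₁] [CompleteSpace H₁]
    [NormedAddCommGroup H₂] [InnerProductSpace ℂ H₂] [CompleteSpace H₂]
    [NormedAddCommGroup H₃] [InnerProductSpace ℂ H₃] [CompleteSpace H₃]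
    (A : H₂ →L[ℂ] H₃) (B : H₁ →L[ℂ] H₂)
    (Ad : H₃ →L[ℂ] H₂) (Bd : H₂ →L[ℂ] H₁) (ABd : H₃ →L[ℂ] H₁)
    (hAcl : IsClosed (LinearMap.range (A : H₂ →ₗ[ℂ] H₃) : Set H₃))
    (hBcl : IsClosed (LinearMap.range (B : H₁ →ₗ[ℂ] H₂) : Set H₂))
    (hABcl : IsClosed (LinearMap.range (A ∘L B : H₁ →ₗ[ℂ] H₃) : Set H₃))
    (hA : IsMPInv A Ad) (hB : IsMPInv B Bd) (hAB : IsMPInv (A ∘L B) ABd)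
    (h : (B ∘L Bd ∘L Ad ∘L A) ∘L (B ∘L Bd ∘L Ad ∘L A) = B ∘L Bd ∘L Ad ∘L A) :
    Ad ∘L A ∘L B ∘L Bd = B ∘L Bd ∘L Ad ∘L A := by
  obtain ⟨hA1, hA2, hA3, hA4⟩ := hA
  obtain ⟨hB1, hB2, hB3, hB4⟩ := hB
  have hP2 : (B ∘L Bd) * (B ∘L Bd) = B ∘L Bd := by
    show B ∘L (Bd ∘L (B ∘L Bd)) = B ∘L Bd
    rw [hB2]
  have hQ2 : (Ad ∘L A) * (Ad ∘L A) = Ad ∘L A := by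
    show Ad ∘L (A ∘L (Ad ∘L A)) = Ad ∘L A
    rw [hA1]
  have hh : ((B ∘L Bd) * (Ad ∘L A)) * ((B ∘L Bd) * (Ad ∘L A)) = (B ∘L Bd) * (Ad ∘L A) := h
  exact my_proj_comm (B ∘L Bd) (Ad ∘L A) hP2 hB3 hQ2 hA4 hh
end

section
/- Let A ∈ B(H₂, H₃) and B ∈ B(H₁, H₂) have closed ranges and suppose AB has closed range. Then AB(AB)† = A B B† A† if and only if B B† A* A B = A* A B. -/
open ContinuousLinearMap

/-- Monoid lemma: if `E` commutes with `X`, and `Y` is a "pseudo-inverse" of `X` with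
projection `G`, then `E` commutes with `G` and with `Y`. -/
private theorem mp_aux {M : Type*} [Monoid M] {E X Y G : M}
    (hEX : E * X = X * E) (hXY : X * Y = G) (hYX : Y * X = G)
    (hGY : G * Y = Y) (hYG : Y * G = Y) (hGX : G * X = X) (hXG : X * G = X) :
    E * G = G * E ∧ E * Y = Y * E := by
  have t1 : E * G = X * (E * Y) := by rw [← hXY, ← mul_assoc, hEX, mul_assoc]
  have t2 : G * E = Y * (E * X) := by rw [← hYX, mul_assoc, ← hEX]
  have t3 : E * G = G * E := by
    have h3 : G * (E * G) = E * G := by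
      rw [t1, ← mul_assoc G X (E * Y), hGX]
    have h4 : (G * E) * G = G * E := by
      rw [t2, mul_assoc Y (E * X) G, mul_assoc E X G, hXG]
    calc E * G = G * (E * G) := h3.symm
      _ = (G * E) * G := by rw [← mul_assoc]
      _ = G * E := h4
  have t4 : X * (E * Y) = Y * (E * X) := by rw [← t1, ← t2, t3]
  have t6 : X * (Y * Y) = Y := by rw [← mul_assoc, hXY, hGY]
  have t5 : E * (Y * Y) = (Y * Y) * E := by
    have hL : Y * ((X * (E * Y)) * Y) = E * (Y * Y) := by
      calc Y * ((X * (E * Y)) * Y)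
          = ((Y * X) * (E * Y)) * Y := by
            rw [← mul_assoc Y (X * (E * Y)) Y, ← mul_assoc Y X (E * Y)]
        _ = (G * (E * Y)) * Y := by rw [hYX]
        _ = ((G * E) * Y) * Y := by rw [← mul_assoc G E Y]
        _ = ((E * G) * Y) * Y := by rw [t3]
        _ = E * ((G * Y) * Y) := by
            rw [mul_assoc (E * G) Y Y, mul_assoc E G (Y * Y), ← mul_assoc G Y Y]
        _ = E * (Y * Y) := by rw [hGY]
    have hR : Y * ((Y * (E * X)) * Y) = (Y * Y) * E := by
      calc Y * ((Y * (E * X)) * Y)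
          = ((Y * Y) * (E * X)) * Y := by
            rw [← mul_assoc Y (Y * (E * X)) Y, ← mul_assoc Y Y (E * X)]
        _ = (Y * Y) * (E * (X * Y)) := by
            rw [mul_assoc (Y * Y) (E * X) Y, mul_assoc E X Y]
        _ = (Y * Y) * (E * G) := by rw [hXY]
        _ = ((Y * Y) * G) * E := by rw [t3, ← mul_assoc]
        _ = (Y * (Y * G)) * E := by rw [mul_assoc Y Y G]
        _ = (Y * Y) * E := by rw [hYG]
    calc E * (Y * Y) = Y * ((X * (E * Y)) * Y) := hL.symm
      _ = Y * ((Y * (E * X)) * Y) := by rw [t4]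
      _ = (Y * Y) * E := hR
  have t7 : E * Y = Y * E := by
    calc E * Y = E * (X * (Y * Y)) := by rw [t6]
      _ = (X * E) * (Y * Y) := by rw [← mul_assoc, hEX]
      _ = X * ((Y * Y) * E) := by rw [mul_assoc, t5]
      _ = (X * (Y * Y)) * E := by rw [← mul_assoc]
      _ = Y * E := by rw [t6]
  exact ⟨t3, t7⟩

set_option maxHeartbeats 2000000 in
theorem stmt9 {H₁ H₂ H₃ : Type*}
    [NormedAddCommGroup H₁] [InnerProductSpace ℂ H₁] [CompleteSpace H₁]
    [NormedAddCommGroup H₂] [InnerProductSpace ℂ H₂] [CompleteSpace H₂]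
    [NormedAddCommGroup H₃] [InnerProductSpace ℂ H₃] [CompleteSpace H₃]
    (A : H₂ →L[ℂ] H₃) (B : H₁ →L[ℂ] H₂)
    (Ad : H₃ →L[ℂ] H₂) (Bd : H₂ →L[ℂ] H₁) (ABd : H₃ →L[ℂ] H₁)
    (hAcl : IsClosed (LinearMap.range (A : H₂ →ₗ[ℂ] H₃) : Set H₃))
    (hBcl : IsClosed (LinearMap.range (B : H₁ →ₗ[ℂ] H₂) : Set H₂))
    (hABcl : IsClosed (LinearMap.range ((A ∘L B : H₁ →L[ℂ] H₃) : H₁ →ₗ[ℂ] H₃) : Set H₃))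
    (hA : IsMPInv A Ad) (hB : IsMPInv B Bd) (hAB : IsMPInv (A ∘L B) ABd) :
    (A ∘L B) ∘L ABd = A ∘L B ∘L Bd ∘L Ad ↔
      B ∘L Bd ∘L ContinuousLinearMap.adjoint A ∘L A ∘L B = ContinuousLinearMap.adjoint A ∘L A ∘L B := by
  obtain ⟨hA1, hA2, hA3, hA4⟩ := hA
  obtain ⟨hB1, hB2, hB3, hB4⟩ := hB
  obtain ⟨hAB1, hAB2, hAB3, hAB4⟩ := hAB
  clear hAcl hBcl hABcl hAB2 hAB4
  -- pointwise Penrose equations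
  have pA1 : ∀ x, A (Ad (A x)) = A x := fun x => DFunLike.congr_fun hA1 x
  have pA2 : ∀ x, Ad (A (Ad x)) = Ad x := fun x => DFunLike.congr_fun hA2 x
  have pB1 : ∀ x, B (Bd (B x)) = B x := fun x => DFunLike.congr_fun hB1 x
  have pB2 : ∀ x, Bd (B (Bd x)) = Bd x := fun x => DFunLike.congr_fun hB2 x
  -- adjoint-derived identities
  have a3op : adjoint Ad ∘L adjoint A = A ∘L Ad := by rw [← adjoint_comp]; exact hA3
  have a3 : ∀ x, adjoint Ad (adjoint A x) = A (Ad x) := fun x => DFunLike.congr_fun a3op x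
  have a4op : adjoint A ∘L adjoint Ad = Ad ∘L A := by rw [← adjoint_comp]; exact hA4
  have a4 : ∀ x, adjoint A (adjoint Ad x) = Ad (A x) := fun x => DFunLike.congr_fun a4op x
  have b3op : adjoint Bd ∘L adjoint B = B ∘L Bd := by rw [← adjoint_comp]; exact hB3
  have b3 : ∀ x, adjoint Bd (adjoint B x) = B (Bd x) := fun x => DFunLike.congr_fun b3op x
  -- `A* (A (Ad y)) = A* y`
  have hc0 : (A ∘L Ad) ∘L A = A := by rw [comp_assoc]; exact hA1
  have h0 := congrArg ContinuousLinearMap.adjoint hc0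
  rw [adjoint_comp, hA3] at h0
  have padj1 : ∀ y, adjoint A (A (Ad y)) = adjoint A y := fun y => DFunLike.congr_fun h0 y
  -- `Ad (A (A* y)) = A* y`
  have h1 := congrArg ContinuousLinearMap.adjoint hA1
  rw [adjoint_comp, hA4] at h1
  have pGAs : ∀ y, Ad (A (adjoint A y)) = adjoint A y := fun y => DFunLike.congr_fun h1 y
  constructor
  · -- forward direction
    intro h
    have ph : ∀ y, A (B (ABd y)) = A (B (Bd (Ad y))) := fun y => DFunLike.congr_fun h y
    have pAB1 : ∀ x, A (B (ABd (A (B x)))) = A (B x) := fun x => DFunLike.congr_fun hAB1 x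
    have hsa : A ∘L B ∘L Bd ∘L Ad
        = ((adjoint Ad ∘L adjoint Bd) ∘L adjoint B) ∘L adjoint A := by
      conv_lhs => rw [← h]
      rw [← hAB3, h]
      simp only [adjoint_comp]
    have psa : ∀ y, A (B (Bd (Ad y)))
        = adjoint Ad (adjoint Bd (adjoint B (adjoint A y))) :=
      fun y => DFunLike.congr_fun hsa y
    have key : ∀ x, adjoint A (A (B x))
        = Ad (A (B (Bd (adjoint A (A (B x)))))) := by
      intro x
      calc adjoint A (A (B x))
          = adjoint A (A (B (ABd (A (B x))))) := by rw [pAB1 x]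
        _ = adjoint A (A (B (Bd (Ad (A (B x)))))) := by rw [ph (A (B x))]
        _ = adjoint A (adjoint Ad (adjoint Bd (adjoint B (adjoint A (A (B x)))))) := by
            rw [psa (A (B x))]
        _ = Ad (A (adjoint Bd (adjoint B (adjoint A (A (B x)))))) := by
            rw [a4 (adjoint Bd (adjoint B (adjoint A (A (B x)))))]
        _ = Ad (A (B (Bd (adjoint A (A (B x)))))) := by
            rw [b3 (adjoint A (A (B x)))]
    -- inner product lemmas
    have e_sa : ∀ (w z : H₂), (inner ℂ (B (Bd w)) z : ℂ) = inner ℂ w (B (Bd z)) := by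
      intro w z
      have h2 := ContinuousLinearMap.adjoint_inner_left (B ∘L Bd) z w
      rw [hB3] at h2
      exact h2
    have g_sa : ∀ (w z : H₂), (inner ℂ w (Ad (A z)) : ℂ) = inner ℂ (Ad (A w)) z := by
      intro w z
      have h2 := ContinuousLinearMap.adjoint_inner_right (Ad ∘L A) w z
      rw [hA4] at h2
      exact h2
    ext x
    show B (Bd (adjoint A (A (B x)))) = adjoint A (A (B x))
    set u : H₂ := adjoint A (A (B x)) with hu
    set v : H₂ := B (Bd u) with hv
    have hGu : Ad (A u) = u := pGAs (A (B x))
    have hkey : u = Ad (A v) := key x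
    have c1 : (inner ℂ u u : ℂ) = inner ℂ u v := by
      calc (inner ℂ u u : ℂ) = inner ℂ u (Ad (A v)) := congrArg (fun t => (inner ℂ u t : ℂ)) hkey
        _ = inner ℂ (Ad (A u)) v := g_sa u v
        _ = inner ℂ u v := by rw [hGu]
    have c2 : (inner ℂ v u : ℂ) = inner ℂ u v := by
      calc (inner ℂ v u : ℂ) = inner ℂ u (B (Bd u)) := e_sa u u
        _ = inner ℂ u v := by rw [← hv]
    have hvv : B (Bd v) = v := by
      have h3 : B (Bd (B (Bd u))) = B (Bd u) := congrArg B (pB2 u)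
      rw [← hv] at h3
      exact h3
    have c3 : (inner ℂ v v : ℂ) = inner ℂ u v := by
      calc (inner ℂ v v : ℂ) = inner ℂ u (B (Bd v)) := e_sa u v
        _ = inner ℂ u v := by rw [hvv]
    have hz : (inner ℂ (u - v) (u - v) : ℂ) = 0 := by
      rw [inner_sub_left, inner_sub_right, inner_sub_right, c1, c2, c3]
      ring
    have huv : u - v = 0 := inner_self_eq_zero.mp hz
    have : u = v := by rwa [sub_eq_zero] at huv
    exact this.symm
  · -- backward direction
    intro hc
    have pcond : ∀ x, B (Bd (adjoint A (A (B x)))) = adjoint A (A (B x)) :=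
      fun x => DFunLike.congr_fun hc x
    -- endomorphisms of H₂
    -- E = B Bd, X = A* A, Y = Ad Ad*, G = Ad A
    have hEs : star ((B : H₁ →L[ℂ] H₂) ∘L Bd) = B ∘L Bd := by
      rw [star_eq_adjoint]; exact hB3
    have hXs : star (adjoint A ∘L A) = adjoint A ∘L A := by
      rw [star_eq_adjoint, adjoint_comp, adjoint_adjoint]
    have hYs : star (Ad ∘L adjoint Ad) = Ad ∘L adjoint Ad := by
      rw [star_eq_adjoint, adjoint_comp, adjoint_adjoint]
    have hGs : star (Ad ∘L A) = Ad ∘L A := by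
      rw [star_eq_adjoint]; exact hA4
    have hEXE : (B ∘L Bd) * ((adjoint A ∘L A) * (B ∘L Bd)) = (adjoint A ∘L A) * (B ∘L Bd) := by
      ext x
      show B (Bd (adjoint A (A (B (Bd x))))) = adjoint A (A (B (Bd x)))
      exact pcond (Bd x)
    have hEXE2 : ((B ∘L Bd) * (adjoint A ∘L A)) * (B ∘L Bd)
        = (B ∘L Bd) * (adjoint A ∘L A) := by
      have h2 := congrArg star hEXE
      simp only [star_mul, hEs, hXs] at h2
      exact h2
    have hEX : (B ∘L Bd) * (adjoint A ∘L A) = (adjoint A ∘L A) * (B ∘L Bd) := by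
      rw [← hEXE2, mul_assoc, hEXE]
    have hXY : (adjoint A ∘L A) * (Ad ∘L adjoint Ad) = Ad ∘L A := by
      ext x
      show adjoint A (A (Ad (adjoint Ad x))) = Ad (A x)
      rw [padj1 (adjoint Ad x)]
      exact a4 x
    have hYX : (Ad ∘L adjoint Ad) * (adjoint A ∘L A) = Ad ∘L A := by
      ext x
      show Ad (adjoint Ad (adjoint A (A x))) = Ad (A x)
      rw [a3 (A x)]
      exact pA2 (A x)
    have hGY : (Ad ∘L A) * (Ad ∘L adjoint Ad) = Ad ∘L adjoint Ad := by
      ext x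
      show Ad (A (Ad (adjoint Ad x))) = Ad (adjoint Ad x)
      exact pA2 (adjoint Ad x)
    have hXG : (adjoint A ∘L A) * (Ad ∘L A) = adjoint A ∘L A := by
      ext x
      show adjoint A (A (Ad (A x))) = adjoint A (A x)
      exact padj1 (A x)
    have hYG : (Ad ∘L adjoint Ad) * (Ad ∘L A) = Ad ∘L adjoint Ad := by
      have h2 := congrArg star hGY
      simp only [star_mul, hYs, hGs] at h2
      exact h2
    have hGX : (Ad ∘L A) * (adjoint A ∘L A) = adjoint A ∘L A := by
      have h2 := congrArg star hXG
      simp only [star_mul, hXs, hGs] at h2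
      exact h2
    obtain ⟨hEG, hEY⟩ := mp_aux hEX hXY hYX hGY hYG hGX hXG
    -- P := A ∘L B ∘L Bd ∘L Ad is the orthogonal projection onto ran (A ∘L B)
    have hP1 : (A ∘L B ∘L Bd ∘L Ad) ∘L (A ∘L B) = A ∘L B := by
      ext x
      show A (B (Bd (Ad (A (B x))))) = A (B x)
      have h2 := DFunLike.congr_fun hEG (B x)
      simp only [ContinuousLinearMap.mul_apply, ContinuousLinearMap.coe_comp',
        Function.comp_apply] at h2
      rw [h2, pB1 x]
      exact pA1 (B x)
    have hAdY : Ad = (Ad ∘L adjoint Ad) ∘L adjoint A := by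
      ext x
      show Ad x = Ad (adjoint Ad (adjoint A x))
      rw [a3 x, pA2 x]
    have hPalt : A ∘L B ∘L Bd ∘L Ad
        = (A ∘L ((B ∘L Bd) * (Ad ∘L adjoint Ad))) ∘L adjoint A := by
      ext x
      show A (B (Bd (Ad x))) = A (B (Bd (Ad (adjoint Ad (adjoint A x)))))
      rw [a3 x, pA2 x]
    have hMs : ContinuousLinearMap.adjoint ((B ∘L Bd) * (Ad ∘L adjoint Ad))
        = (Ad ∘L adjoint Ad) * (B ∘L Bd) := by
      rw [← star_eq_adjoint, star_mul, hEs, hYs]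
    have hPs : ContinuousLinearMap.adjoint (A ∘L B ∘L Bd ∘L Ad) = A ∘L B ∘L Bd ∘L Ad := by
      rw [hPalt, adjoint_comp, adjoint_comp, adjoint_adjoint, hMs, ← hEY]
      rw [← comp_assoc]
    have hQ1 : ((A ∘L B) ∘L ABd) ∘L (A ∘L B) = A ∘L B := by
      rw [comp_assoc]; exact hAB1
    have hPQ : (A ∘L B ∘L Bd ∘L Ad) ∘L ((A ∘L B) ∘L ABd) = (A ∘L B) ∘L ABd := by
      rw [← comp_assoc (A ∘L B ∘L Bd ∘L Ad) (A ∘L B) ABd, hP1]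
    have hPsplit : A ∘L B ∘L Bd ∘L Ad = (A ∘L B) ∘L (Bd ∘L Ad) :=
      (comp_assoc A B (Bd ∘L Ad)).symm
    have hQP : ((A ∘L B) ∘L ABd) ∘L (A ∘L B ∘L Bd ∘L Ad) = A ∘L B ∘L Bd ∘L Ad := by
      rw [hPsplit, ← comp_assoc ((A ∘L B) ∘L ABd) (A ∘L B) (Bd ∘L Ad), hQ1]
    calc (A ∘L B) ∘L ABd
        = ContinuousLinearMap.adjoint ((A ∘L B) ∘L ABd) := hAB3.symm
      _ = ContinuousLinearMap.adjoint ((A ∘L B ∘L Bd ∘L Ad) ∘L ((A ∘L B) ∘L ABd)) := by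
          rw [hPQ]
      _ = ContinuousLinearMap.adjoint ((A ∘L B) ∘L ABd)
            ∘L ContinuousLinearMap.adjoint (A ∘L B ∘L Bd ∘L Ad) := adjoint_comp _ _
      _ = ((A ∘L B) ∘L ABd) ∘L (A ∘L B ∘L Bd ∘L Ad) := by rw [hAB3, hPs]
      _ = A ∘L B ∘L Bd ∘L Ad := hQP
end

section
/- Let A ∈ B(H₂, H₃) and B ∈ B(H₁, H₂) have closed ranges and suppose AB has closed range. Then AB(AB)† = A B B† A† if and only if A* A B B† = B B† A* A. -/
open ContinuousLinearMap

/-- In a C*-ring, two "projections" with `(PR)² = PR` and `(RP)² = RP` commute. -/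
lemma cstar_pr {E : Type*} [NormedRing E] [StarRing E] [CStarRing E]
    (P R : E) (hpsa : star P = P) (hrsa : star R = R) (hp2 : P*P = P) (hr2 : R*R = R)
    (hprpr : P*R*P*R = P*R) : P*R = R*P := by
  have hrprp : R*P*R*P = R*P := by
    have := congrArg star hprpr
    simpa [star_mul, hpsa, hrsa, mul_assoc] using this
  have h1 : P*(R*(P*R)) = P*R := by simpa [mul_assoc] using hprpr
  have hp2' : ∀ x : E, P*(P*x) = P*x := fun x => by rw [← mul_assoc, hp2]
  have hr2' : ∀ x : E, R*(R*x) = R*x := fun x => by rw [← mul_assoc, hr2]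
  have hu : star (P*R - R*(P*R)) * (P*R - R*(P*R)) = 0 := by
    have hsu : star (P*R - R*(P*R)) = R*P - R*(P*R) := by
      simp [star_sub, star_mul, hpsa, hrsa, mul_assoc]
    rw [hsu]
    simp only [sub_mul, mul_sub, mul_assoc, hp2', hr2', h1]
    abel
  have hu0 : P*R - R*(P*R) = 0 := (CStarRing.star_mul_self_eq_zero_iff _).mp hu
  have h2 : P*R = R*(P*R) := sub_eq_zero.mp hu0
  have h3 : R*P = (R*P)*R := by
    have := congrArg star h2
    simpa [star_sub, star_mul, hpsa, hrsa, mul_assoc] using this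
  calc P*R = R*(P*R) := h2
    _ = (R*P)*R := by rw [mul_assoc]
    _ = R*P := h3.symm

lemma cstar_fwd {E : Type*} [NormedRing E] [StarRing E] [CStarRing E] (M P R S : E)
    (hmsa : star M = M) (hpsa : star P = P) (hrsa : star R = R)
    (hp2 : P*P = P) (hr2 : R*R = R) (hms : M*S = R) (hmr : M*R = M)
    (hmprp : M*(P*(R*P)) = M*P) (hmpr : M*(P*R) = R*(P*M)) : M*P = P*M := by
  have hprpm : P*(R*(P*M)) = P*M := by
    have := congrArg star hmprp
    simpa [star_mul, hmsa, hpsa, hrsa, mul_assoc] using this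
  have hprpr : P*(R*(P*R)) = P*R := by
    have := congrArg (· * S) hprpm
    simpa [mul_assoc, hms] using this
  have hpr_rp : P*R = R*P :=
    cstar_pr P R hpsa hrsa hp2 hr2 (by simpa [mul_assoc] using hprpr)
  have h1 : M*P = R*(P*M) := by
    rw [← hmpr, hpr_rp, ← mul_assoc, hmr]
  have h3 : P*M = M*P := by
    calc P*M = star (M*P) := by rw [star_mul, hmsa, hpsa]
      _ = star (R*(P*M)) := by rw [h1]
      _ = (M*P)*R := by rw [star_mul, star_mul, hmsa, hpsa, hrsa]
      _ = M*(R*P) := by rw [mul_assoc, hpr_rp]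
      _ = M*P := by rw [← mul_assoc, hmr]
  exact h3.symm

lemma ring_pr {E : Type*} [Ring E] (M P R S : E) (h : M*P = P*M)
    (hsm : S*M = R) (hms : M*S = R) (hmr : M*R = M) (hrm : R*M = M) :
    P*R = R*P := by
  have h1 : R*P = S*(P*M) := by rw [← hsm, mul_assoc, h]
  have h2 : (R*P)*R = R*P := by
    calc (R*P)*R = (S*(P*M))*R := by rw [h1]
      _ = S*(P*(M*R)) := by rw [mul_assoc, mul_assoc]
      _ = S*(P*M) := by rw [hmr]
      _ = R*P := h1.symm
  have h3 : P*R = (M*P)*S := by rw [← hms, ← mul_assoc, ← h]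
  have h4 : R*(P*R) = P*R := by
    calc R*(P*R) = R*((M*P)*S) := by rw [h3]
      _ = ((R*M)*P)*S := by rw [← mul_assoc, ← mul_assoc]
      _ = (M*P)*S := by rw [hrm]
      _ = P*R := h3.symm
  calc P*R = R*(P*R) := h4.symm
    _ = (R*P)*R := by rw [mul_assoc]
    _ = R*P := h2

lemma ring_ps {E : Type*} [Ring E] (M P R S : E) (h : M*P = P*M)
    (hsm : S*M = R) (hms : M*S = R) (hrs : R*S = S) (hpr : P*R = R*P) :
    P*S = S*P := by
  have hy : P*S = R*(P*S) := by
    calc P*S = P*(R*S) := by rw [hrs]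
      _ = (P*R)*S := by rw [mul_assoc]
      _ = (R*P)*S := by rw [hpr]
      _ = R*(P*S) := by rw [mul_assoc]
  have hz : S*P = R*(S*P) := by
    calc S*P = (R*S)*P := by rw [hrs]
      _ = R*(S*P) := by rw [mul_assoc]
  have hq : M*(P*S) = M*(S*P) := by
    calc M*(P*S) = (M*P)*S := by rw [mul_assoc]
      _ = (P*M)*S := by rw [h]
      _ = P*(M*S) := by rw [mul_assoc]
      _ = P*R := by rw [hms]
      _ = R*P := hpr
      _ = (M*S)*P := by rw [hms]
      _ = M*(S*P) := by rw [mul_assoc]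
  calc P*S = R*(P*S) := hy
    _ = (S*M)*(P*S) := by rw [hsm]
    _ = S*(M*(P*S)) := by rw [mul_assoc]
    _ = S*(M*(S*P)) := by rw [hq]
    _ = (S*M)*(S*P) := by rw [← mul_assoc]
    _ = R*(S*P) := by rw [hsm]
    _ = S*P := hz.symm

set_option maxHeartbeats 2000000 in
theorem stmt10 {H₁ H₂ H₃ : Type*}
    [NormedAddCommGroup H₁] [InnerProductSpace ℂ H₁] [CompleteSpace H₁]
    [NormedAddCommGroup H₂] [InnerProductSpace ℂ H₂] [CompleteSpace H₂]
    [NormedAddCommGroup H₃] [InnerProductSpace ℂ H₃] [CompleteSpace H₃]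
    (A : H₂ →L[ℂ] H₃) (B : H₁ →L[ℂ] H₂)
    (Ad : H₃ →L[ℂ] H₂) (Bd : H₂ →L[ℂ] H₁) (ABd : H₃ →L[ℂ] H₁)
    (hAcl : IsClosed (LinearMap.range (A : H₂ →ₗ[ℂ] H₃) : Set H₃))
    (hBcl : IsClosed (LinearMap.range (B : H₁ →ₗ[ℂ] H₂) : Set H₂))
    (hABcl : IsClosed (LinearMap.range (A ∘L B : H₁ →ₗ[ℂ] H₃) : Set H₃))
    (hA : IsMPInv A Ad) (hB : IsMPInv B Bd) (hAB : IsMPInv (A ∘L B) ABd) :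
    (A ∘L B) ∘L ABd = A ∘L B ∘L Bd ∘L Ad ↔
      ContinuousLinearMap.adjoint A ∘L A ∘L B ∘L Bd = B ∘L Bd ∘L ContinuousLinearMap.adjoint A ∘L A := by
  obtain ⟨hA1, hA2, hA3, hA4⟩ := hA
  obtain ⟨hB1, hB2, hB3, hB4⟩ := hB
  obtain ⟨hAB1, hAB2, hAB3, hAB4⟩ := hAB
  -- pointwise versions of the Penrose equations
  have fA1 : ∀ x : H₂, A (Ad (A x)) = A x := fun x => by
    simpa using DFunLike.congr_fun hA1 x
  have fA2 : ∀ x : H₃, Ad (A (Ad x)) = Ad x := fun x => by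
    simpa using DFunLike.congr_fun hA2 x
  have fB1 : ∀ x : H₁, B (Bd (B x)) = B x := fun x => by
    simpa using DFunLike.congr_fun hB1 x
  have fB2 : ∀ x : H₂, Bd (B (Bd x)) = Bd x := fun x => by
    simpa using DFunLike.congr_fun hB2 x
  have fAB1 : ∀ x : H₁, A (B (ABd (A (B x)))) = A (B x) := fun x => by
    simpa using DFunLike.congr_fun hAB1 x
  -- adjoint facts
  have O5 : adjoint Ad ∘L adjoint A = A ∘L Ad := by rw [← adjoint_comp, hA3]
  have O6 : adjoint A ∘L adjoint Ad = Ad ∘L A := by rw [← adjoint_comp, hA4]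
  have O7 : adjoint Bd ∘L adjoint B = B ∘L Bd := by rw [← adjoint_comp, hB3]
  have f5 : ∀ x : H₃, adjoint Ad (adjoint A x) = A (Ad x) := fun x => by
    simpa using DFunLike.congr_fun O5 x
  have f6 : ∀ x : H₂, adjoint A (adjoint Ad x) = Ad (A x) := fun x => by
    simpa using DFunLike.congr_fun O6 x
  have f7 : ∀ x : H₂, adjoint Bd (adjoint B x) = B (Bd x) := fun x => by
    simpa using DFunLike.congr_fun O7 x
  have O8 : (Ad ∘L A) ∘L adjoint A = adjoint A := by
    rw [← hA4, ← adjoint_comp, hA1]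
  have f8 : ∀ x : H₃, Ad (A (adjoint A x)) = adjoint A x := fun x => by
    simpa using DFunLike.congr_fun O8 x
  have fg1 : ∀ x : H₃, adjoint A (A (Ad x)) = adjoint A x := fun x => by
    rw [← f5 x, f6, f8]
  -- notation for the four endomorphisms of H₂
  -- M := adjoint A ∘L A, P := B ∘L Bd, R := Ad ∘L A, S := Ad ∘L adjoint Ad
  have hmsa : star (adjoint A ∘L A) = adjoint A ∘L A := by
    rw [star_eq_adjoint, adjoint_comp, adjoint_adjoint]
  have hpsa : star (B ∘L Bd) = B ∘L Bd := by rw [star_eq_adjoint, hB3]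
  have hrsa : star (Ad ∘L A) = Ad ∘L A := by rw [star_eq_adjoint, hA4]
  have hp2 : (B ∘L Bd) * (B ∘L Bd) = B ∘L Bd := by
    ext x
    simp only [mul_apply_eq_comp, comp_apply]
    rw [fB1]
  have hr2 : (Ad ∘L A) * (Ad ∘L A) = Ad ∘L A := by
    ext x
    simp only [mul_apply_eq_comp, comp_apply]
    rw [fA2]
  have hms : (adjoint A ∘L A) * (Ad ∘L adjoint Ad) = Ad ∘L A := by
    ext x
    simp only [mul_apply_eq_comp, comp_apply]
    rw [fg1, f6]
  have hsm : (Ad ∘L adjoint Ad) * (adjoint A ∘L A) = Ad ∘L A := by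
    ext x
    simp only [mul_apply_eq_comp, comp_apply]
    rw [f5, fA2]
  have hmr : (adjoint A ∘L A) * (Ad ∘L A) = adjoint A ∘L A := by
    ext x
    simp only [mul_apply_eq_comp, comp_apply]
    rw [fg1]
  have hrm : (Ad ∘L A) * (adjoint A ∘L A) = adjoint A ∘L A := by
    ext x
    simp only [mul_apply_eq_comp, comp_apply]
    rw [f8]
  have hrs : (Ad ∘L A) * (Ad ∘L adjoint Ad) = Ad ∘L adjoint Ad := by
    ext x
    simp only [mul_apply_eq_comp, comp_apply]
    rw [fA2]
  constructor
  · -- forward direction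
    intro h
    have f_h : ∀ x : H₃, A (B (ABd x)) = A (B (Bd (Ad x))) := fun x => by
      simpa using DFunLike.congr_fun h x
    have f_i : ∀ y : H₁, A (B (Bd (Ad (A (B y))))) = A (B y) := fun y => by
      rw [← f_h, fAB1]
    have hmprp : (adjoint A ∘L A) * ((B ∘L Bd) * ((Ad ∘L A) * (B ∘L Bd))) =
        (adjoint A ∘L A) * (B ∘L Bd) := by
      ext x
      simp only [mul_apply_eq_comp, comp_apply]
      rw [f_i]
    -- T is self-adjoint
    have hT_sa : adjoint (A ∘L B ∘L Bd ∘L Ad) = A ∘L B ∘L Bd ∘L Ad := by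
      rw [← h]; exact hAB3
    have f_T : ∀ x : H₃, adjoint Ad (adjoint Bd (adjoint B (adjoint A x))) =
        A (B (Bd (Ad x))) := fun x => by
      have h0 : adjoint (A ∘L B ∘L Bd ∘L Ad) =
          adjoint Ad ∘L (adjoint Bd ∘L (adjoint B ∘L adjoint A)) := by
        simp [adjoint_comp, comp_assoc]
      have := DFunLike.congr_fun (h0.symm.trans hT_sa) x
      simpa using this
    have hmpr : (adjoint A ∘L A) * ((B ∘L Bd) * (Ad ∘L A)) =
        (Ad ∘L A) * ((B ∘L Bd) * (adjoint A ∘L A)) := by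
      ext x
      simp only [mul_apply_eq_comp, comp_apply]
      rw [← f_T, f6, f7]
    have key := cstar_fwd (adjoint A ∘L A) (B ∘L Bd) (Ad ∘L A) (Ad ∘L adjoint Ad)
      hmsa hpsa hrsa hp2 hr2 hms hmr hmprp hmpr
    exact key
  · -- backward direction
    intro h
    have hmp : (adjoint A ∘L A) * (B ∘L Bd) = (B ∘L Bd) * (adjoint A ∘L A) := h
    have hpr : (B ∘L Bd) * (Ad ∘L A) = (Ad ∘L A) * (B ∘L Bd) :=
      ring_pr (adjoint A ∘L A) (B ∘L Bd) (Ad ∘L A) (Ad ∘L adjoint Ad) hmp hsm hms hmr hrm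
    have hps : (B ∘L Bd) * (Ad ∘L adjoint Ad) = (Ad ∘L adjoint Ad) * (B ∘L Bd) :=
      ring_ps (adjoint A ∘L A) (B ∘L Bd) (Ad ∘L A) (Ad ∘L adjoint Ad) hmp hsm hms hrs hpr
    have f_pr : ∀ x : H₂, B (Bd (Ad (A x))) = Ad (A (B (Bd x))) := fun x => by
      simpa using DFunLike.congr_fun hpr x
    have f_sp : ∀ x : H₂, Ad (adjoint Ad (B (Bd x))) = B (Bd (Ad (adjoint Ad x))) :=
      fun x => by simpa using DFunLike.congr_fun hps.symm x
    -- Ad' = A ∘ S pointwise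
    have OAd' : adjoint Ad = (A ∘L Ad) ∘L adjoint Ad := by
      conv_lhs => rw [← hA2]
      rw [show Ad ∘L A ∘L Ad = (Ad ∘L (A ∘L Ad)) from rfl]
      rw [adjoint_comp, hA3]
    have fAd' : ∀ x : H₂, adjoint Ad x = A (Ad (adjoint Ad x)) := fun x => by
      conv_lhs => rw [OAd']
      simp
    -- T is self-adjoint
    have hT_sa : adjoint (A ∘L B ∘L Bd ∘L Ad) = A ∘L B ∘L Bd ∘L Ad := by
      have h0 : adjoint (A ∘L B ∘L Bd ∘L Ad) =
          adjoint Ad ∘L (adjoint Bd ∘L (adjoint B ∘L adjoint A)) := by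
        simp [adjoint_comp, comp_assoc]
      rw [h0]
      ext x
      simp only [comp_apply]
      rw [f7, fAd', f_sp, f5, fA2]
    -- E ∘ T = T
    have hET : ((A ∘L B) ∘L ABd) * (A ∘L B ∘L Bd ∘L Ad) = A ∘L B ∘L Bd ∘L Ad := by
      ext x
      simp only [mul_apply_eq_comp, comp_apply]
      rw [fAB1]
    -- T ∘ E = E
    have hTE : (A ∘L B ∘L Bd ∘L Ad) * ((A ∘L B) ∘L ABd) = (A ∘L B) ∘L ABd := by
      ext x
      simp only [mul_apply_eq_comp, comp_apply]
      rw [f_pr, fB1, fA1]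
    have he_sa : star ((A ∘L B) ∘L ABd) = (A ∘L B) ∘L ABd := by
      rw [star_eq_adjoint]; exact hAB3
    have ht_sa : star (A ∘L B ∘L Bd ∘L Ad) = A ∘L B ∘L Bd ∘L Ad := by
      rw [star_eq_adjoint]; exact hT_sa
    have : A ∘L B ∘L Bd ∘L Ad = (A ∘L B) ∘L ABd := by
      calc A ∘L B ∘L Bd ∘L Ad = star (A ∘L B ∘L Bd ∘L Ad) := ht_sa.symm
        _ = star (((A ∘L B) ∘L ABd) * (A ∘L B ∘L Bd ∘L Ad)) := by rw [hET]
        _ = star (A ∘L B ∘L Bd ∘L Ad) * star ((A ∘L B) ∘L ABd) := by rw [star_mul]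
        _ = (A ∘L B ∘L Bd ∘L Ad) * ((A ∘L B) ∘L ABd) := by rw [ht_sa, he_sa]
        _ = (A ∘L B) ∘L ABd := hTE
    exact this.symm
end

section
/- Let A ∈ B(H₂, H₃) and B ∈ B(H₁, H₂) have closed ranges and suppose AB has closed range. Then B† A† satisfies the first and third Penrose equations for AB (i.e., AB·B†A†·AB = AB and (AB·B†A†)* = AB·B†A†) if and only if AB(AB)† = A B B† A†. -/
open ContinuousLinearMap

/-- If `X` and `D` both satisfy the first and third Penrose equations for `M`,
then `M ∘L X = M ∘L D`. -/
lemma mp13_unique {E F : Type*} [NormedAddCommGroup E] [InnerProductSpace ℂ E]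
    [NormedAddCommGroup F] [InnerProductSpace ℂ F] [CompleteSpace E] [CompleteSpace F]
    (M : E →L[ℂ] F) (D X : F →L[ℂ] E)
    (h1 : M ∘L D ∘L M = M) (h3 : ContinuousLinearMap.adjoint (M ∘L D) = M ∘L D)
    (e1 : M ∘L X ∘L M = M) (e3 : ContinuousLinearMap.adjoint (M ∘L X) = M ∘L X) :
    M ∘L D = M ∘L X := by
  have step1 : M ∘L D = (M ∘L X) ∘L (M ∘L D) := by
    conv_lhs => rw [← e1]
    rfl
  calc M ∘L D = ContinuousLinearMap.adjoint (M ∘L D) := h3.symm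
    _ = ContinuousLinearMap.adjoint ((M ∘L X) ∘L (M ∘L D)) := by rw [← step1]
    _ = ContinuousLinearMap.adjoint (M ∘L D) ∘L ContinuousLinearMap.adjoint (M ∘L X) := by
        rw [adjoint_comp]
    _ = (M ∘L D) ∘L (M ∘L X) := by rw [h3, e3]
    _ = (M ∘L D ∘L M) ∘L X := rfl
    _ = M ∘L X := by rw [h1]

theorem stmt11 {H₁ H₂ H₃ : Type*}
    [NormedAddCommGroup H₁] [InnerProductSpace ℂ H₁] [CompleteSpace H₁]
    [NormedAddCommGroup H₂] [InnerProductSpace ℂ H₂] [CompleteSpace H₂]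
    [NormedAddCommGroup H₃] [InnerProductSpace ℂ H₃] [CompleteSpace H₃]
    (A : H₂ →L[ℂ] H₃) (B : H₁ →L[ℂ] H₂)
    (Ad : H₃ →L[ℂ] H₂) (Bd : H₂ →L[ℂ] H₁) (ABd : H₃ →L[ℂ] H₁)
    (hAcl : IsClosed (LinearMap.range (A : H₂ →ₗ[ℂ] H₃) : Set H₃))
    (hBcl : IsClosed (LinearMap.range (B : H₁ →ₗ[ℂ] H₂) : Set H₂))
    (hABcl : IsClosed (LinearMap.range ((A ∘L B : H₁ →L[ℂ] H₃) : H₁ →ₗ[ℂ] H₃) : Set H₃))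
    (hA : IsMPInv A Ad) (hB : IsMPInv B Bd) (hAB : IsMPInv (A ∘L B) ABd) :
    (A ∘L B ∘L Bd ∘L Ad ∘L A ∘L B = A ∘L B ∧
        ContinuousLinearMap.adjoint (A ∘L B ∘L Bd ∘L Ad) = A ∘L B ∘L Bd ∘L Ad) ↔
      (A ∘L B) ∘L ABd = A ∘L B ∘L Bd ∘L Ad := by
  obtain ⟨h1, -, h3, -⟩ := hAB
  constructor
  · rintro ⟨e1, e3⟩
    exact mp13_unique (A ∘L B) ABd (Bd ∘L Ad) h1 h3 e1 e3
  · intro h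
    have h' : (A ∘L B) ∘L (Bd ∘L Ad) = (A ∘L B) ∘L ABd := h.symm
    constructor
    · show ((A ∘L B) ∘L (Bd ∘L Ad)) ∘L (A ∘L B) = A ∘L B
      rw [h']; exact h1
    · show ContinuousLinearMap.adjoint ((A ∘L B) ∘L (Bd ∘L Ad)) = (A ∘L B) ∘L (Bd ∘L Ad)
      rw [h']; exact h3
end

section
/- Let A ∈ B(H₂, H₃) and B ∈ B(H₁, H₂) have closed ranges and suppose AB has closed range. Then (AB)† AB = B† A† AB if and only if A B B* = A B B* A† A. -/
open ContinuousLinearMap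

set_option maxHeartbeats 1000000 in
theorem stmt12 {H₁ H₂ H₃ : Type*}
    [NormedAddCommGroup H₁] [InnerProductSpace ℂ H₁] [CompleteSpace H₁]
    [NormedAddCommGroup H₂] [InnerProductSpace ℂ H₂] [CompleteSpace H₂]
    [NormedAddCommGroup H₃] [InnerProductSpace ℂ H₃] [CompleteSpace H₃]
    (A : H₂ →L[ℂ] H₃) (B : H₁ →L[ℂ] H₂)
    (Ad : H₃ →L[ℂ] H₂) (Bd : H₂ →L[ℂ] H₁) (ABd : H₃ →L[ℂ] H₁)
    (hAcl : IsClosed (LinearMap.range (A : H₂ →ₗ[ℂ] H₃) : Set H₃))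
    (hBcl : IsClosed (LinearMap.range (B : H₁ →ₗ[ℂ] H₂) : Set H₂))
    (hABcl : IsClosed (LinearMap.range ((A ∘L B : H₁ →L[ℂ] H₃) : H₁ →ₗ[ℂ] H₃) : Set H₃))
    (hA : IsMPInv A Ad) (hB : IsMPInv B Bd) (hAB : IsMPInv (A ∘L B) ABd) :
    ABd ∘L A ∘L B = Bd ∘L Ad ∘L A ∘L B ↔
      A ∘L B ∘L ContinuousLinearMap.adjoint B = A ∘L B ∘L ContinuousLinearMap.adjoint B ∘L Ad ∘L A := by
  obtain ⟨hA1, hA2, hA3, hA4⟩ := hA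
  obtain ⟨hB1, hB2, hB3, hB4⟩ := hB
  obtain ⟨hC1, hC2, hC3, hC4⟩ := hAB
  have pA1 : ∀ x, A (Ad (A x)) = A x := fun x => DFunLike.congr_fun hA1 x
  have pA2 : ∀ x, Ad (A (Ad x)) = Ad x := fun x => DFunLike.congr_fun hA2 x
  have hA4' : adjoint A ∘L adjoint Ad = Ad ∘L A := by rw [← adjoint_comp]; exact hA4
  have pA4 : ∀ x, adjoint A (adjoint Ad x) = Ad (A x) := fun x => DFunLike.congr_fun hA4' x
  have pB1 : ∀ x, B (Bd (B x)) = B x := fun x => DFunLike.congr_fun hB1 x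
  have pB2 : ∀ x, Bd (B (Bd x)) = Bd x := fun x => DFunLike.congr_fun hB2 x
  have hB3' : adjoint Bd ∘L adjoint B = B ∘L Bd := by rw [← adjoint_comp]; exact hB3
  have hB4' : adjoint B ∘L adjoint Bd = Bd ∘L B := by rw [← adjoint_comp]; exact hB4
  have pB3 : ∀ x, adjoint Bd (adjoint B x) = B (Bd x) := fun x => DFunLike.congr_fun hB3' x
  have pB4 : ∀ x, adjoint B (adjoint Bd x) = Bd (B x) := fun x => DFunLike.congr_fun hB4' x
  have pC1 : ∀ x, A (B (ABd (A (B x)))) = A (B x) := fun x => DFunLike.congr_fun hC1 x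
  -- pB5 / pB7 : consequences of Bd ∘ B ∘ Bd = Bd under adjoints
  have hB2adj := congrArg (adjoint (𝕜 := ℂ)) hB2
  simp only [adjoint_comp] at hB2adj
  have pB2s : ∀ x, adjoint Bd (adjoint B (adjoint Bd x)) = adjoint Bd x :=
    fun x => DFunLike.congr_fun hB2adj x
  have pB5 : ∀ x, B (Bd (adjoint Bd x)) = adjoint Bd x := by
    intro x; have := pB2s x; rwa [pB3] at this
  have pB7 : ∀ x, adjoint Bd (Bd (B x)) = adjoint Bd x := by
    intro x; have := pB2s x; rwa [pB4] at this
  -- inner ℂ product moves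
  have e0 : ∀ (u v : H₂), (inner ℂ (Ad (A u)) v : ℂ) = inner ℂ u (Ad (A v)) := by
    intro u v
    have := adjoint_inner_left (𝕜 := ℂ) (Ad ∘L A) v u
    rw [hA4] at this; exact this
  have eF : ∀ (u v : H₂), (inner ℂ (B (Bd u)) v : ℂ) = inner ℂ u (B (Bd v)) := by
    intro u v
    have := adjoint_inner_left (𝕜 := ℂ) (B ∘L Bd) v u
    rw [hB3] at this; exact this
  constructor
  · -- forward direction
    intro h
    have ph : ∀ x, ABd (A (B x)) = Bd (Ad (A (B x))) := fun x => DFunLike.congr_fun h x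
    have step1 : ∀ x, A (B (Bd (Ad (A (B x))))) = A (B x) := by
      intro x; rw [← ph]; exact pC1 x
    have step2 : ∀ x, Ad (A (B (Bd (Ad (A (B x)))))) = Ad (A (B x)) :=
      fun x => congrArg Ad (step1 x)
    have hFEb : ∀ x, B (Bd (Ad (A (B x)))) = Ad (A (B x)) := by
      intro x
      have hEFw := step2 x
      set w := Ad (A (B x)) with hw
      have t1 : (inner ℂ w (B (Bd w)) : ℂ) = inner ℂ w w := by
        calc (inner ℂ w (B (Bd w)) : ℂ) = inner ℂ (Ad (A w)) (B (Bd w)) := by rw [pA2]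
        _ = inner ℂ w (Ad (A (B (Bd w)))) := e0 _ _
        _ = inner ℂ w w := by rw [hEFw]
      have t2 : (inner ℂ (B (Bd w)) w : ℂ) = inner ℂ w w := (eF _ _).trans t1
      have t3 : (inner ℂ (B (Bd w)) (B (Bd w)) : ℂ) = inner ℂ w w := by
        calc (inner ℂ (B (Bd w)) (B (Bd w)) : ℂ) = inner ℂ w (B (Bd (B (Bd w)))) := eF _ _
        _ = inner ℂ w (B (Bd w)) := by rw [pB2]
        _ = inner ℂ w w := t1
      have key : (inner ℂ (B (Bd w) - w) (B (Bd w) - w) : ℂ) = 0 := by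
        rw [inner_sub_left, inner_sub_right, inner_sub_right, t1, t2, t3]; ring
      exact sub_eq_zero.mp (inner_self_eq_zero.mp key)
    have hFEbop : B ∘L Bd ∘L Ad ∘L A ∘L B = Ad ∘L A ∘L B := by
      ext x; exact hFEb x
    have h4 := congrArg (adjoint (𝕜 := ℂ)) hFEbop
    simp only [adjoint_comp] at h4
    have hbsEF : ∀ x, adjoint B (adjoint A (adjoint Ad (adjoint Bd (adjoint B x)))) =
        adjoint B (adjoint A (adjoint Ad x)) := fun x => DFunLike.congr_fun h4 x
    simp only [pB3, pA4] at hbsEF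
    -- hbsEF : ∀ x, adjoint B (Ad (A (B (Bd x)))) = adjoint B (Ad (A x))
    have hTop : adjoint (Bd ∘L Ad ∘L A ∘L B) = Bd ∘L Ad ∘L A ∘L B := by
      rw [← h]; exact hC4
    simp only [adjoint_comp] at hTop
    have pTsa : ∀ x, adjoint B (adjoint A (adjoint Ad (adjoint Bd x))) = Bd (Ad (A (B x))) :=
      fun x => DFunLike.congr_fun hTop x
    simp only [pA4] at pTsa
    -- pTsa : ∀ x, adjoint B (Ad (A (adjoint Bd x))) = Bd (Ad (A (B x)))
    have final : ∀ x, A (B (adjoint B x)) = A (B (adjoint B (Ad (A x)))) := by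
      intro x
      calc A (B (adjoint B x)) = A (B (Bd (Ad (A (B (adjoint B x)))))) :=
            (step1 (adjoint B x)).symm
      _ = A (B (adjoint B (Ad (A (adjoint Bd (adjoint B x)))))) := by rw [← pTsa]
      _ = A (B (adjoint B (Ad (A (B (Bd x)))))) := by rw [pB3]
      _ = A (B (adjoint B (Ad (A x)))) := by rw [hbsEF]
    ext x
    exact final x
  · -- backward direction
    intro h
    have ph : ∀ x, A (B (adjoint B x)) = A (B (adjoint B (Ad (A x)))) :=
      fun x => DFunLike.congr_fun h x
    have pESE : ∀ x, Ad (A (B (adjoint B x))) = Ad (A (B (adjoint B (Ad (A x))))) :=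
      fun x => congrArg Ad (ph x)
    have hESEop : Ad ∘L A ∘L B ∘L adjoint B = Ad ∘L A ∘L B ∘L adjoint B ∘L Ad ∘L A := by
      ext x; exact pESE x
    have h1 := congrArg (adjoint (𝕜 := ℂ)) hESEop
    simp only [adjoint_comp, adjoint_adjoint] at h1
    have p0 : ∀ x, B (adjoint B (adjoint A (adjoint Ad x))) =
        adjoint A (adjoint Ad (B (adjoint B (adjoint A (adjoint Ad x))))) :=
      fun x => DFunLike.congr_fun h1 x
    simp only [pA4] at p0
    -- p0 : ∀ x, B (adjoint B (Ad (A x))) = Ad (A (B (adjoint B (Ad (A x)))))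
    have hSE : ∀ x, B (adjoint B (Ad (A x))) = Ad (A (B (adjoint B x))) :=
      fun x => (p0 x).trans (pESE x).symm
    -- EF = FE
    have hFEF : ∀ x, B (Bd (Ad (A (B (Bd x))))) = Ad (A (B (Bd x))) := by
      intro x
      calc B (Bd (Ad (A (B (Bd x)))))
          = B (Bd (Ad (A (B (adjoint B (adjoint Bd (Bd x))))))) := by rw [pB4, pB2]
      _ = B (Bd (B (adjoint B (Ad (A (adjoint Bd (Bd x))))))) := by rw [hSE]
      _ = B (adjoint B (Ad (A (adjoint Bd (Bd x))))) := by rw [pB1]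
      _ = Ad (A (B (adjoint B (adjoint Bd (Bd x))))) := by rw [hSE]
      _ = Ad (A (B (Bd x))) := by rw [pB4, pB2]
    have hFEFop : B ∘L Bd ∘L Ad ∘L A ∘L B ∘L Bd = Ad ∘L A ∘L B ∘L Bd := by
      ext x; exact hFEF x
    have h2 := congrArg (adjoint (𝕜 := ℂ)) hFEFop
    simp only [adjoint_comp] at h2
    have p2 : ∀ x, adjoint Bd (adjoint B (adjoint A (adjoint Ad (adjoint Bd (adjoint B x))))) =
        adjoint Bd (adjoint B (adjoint A (adjoint Ad x))) := fun x => DFunLike.congr_fun h2 x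
    simp only [pB3, pA4] at p2
    -- p2 : ∀ x, B (Bd (Ad (A (B (Bd x))))) = B (Bd (Ad (A x)))
    have hEF : ∀ x, Ad (A (B (Bd x))) = B (Bd (Ad (A x))) :=
      fun x => (hFEF x).symm.trans (p2 x)
    -- cT = c
    have hCT : ∀ x, A (B (Bd (Ad (A (B x))))) = A (B x) := by
      intro x
      calc A (B (Bd (Ad (A (B x))))) = A (Ad (A (B (Bd (B x))))) := by rw [hEF]
      _ = A (Ad (A (B x))) := by rw [pB1]
      _ = A (B x) := by rw [pA1]
    -- auxiliary N-facts
    have pSN : ∀ x, B (adjoint B (adjoint Bd (Bd x))) = B (Bd x) := by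
      intro x; rw [pB4, pB2]
    have pNS : ∀ x, adjoint Bd (Bd (B (adjoint B x))) = B (Bd x) := by
      intro x; rw [pB7, pB3]
    have pFN : ∀ x, B (Bd (adjoint Bd (Bd x))) = adjoint Bd (Bd x) := fun x => pB5 (Bd x)
    -- EN = NE
    have hEN : ∀ x, adjoint Bd (Bd (Ad (A x))) = Ad (A (adjoint Bd (Bd x))) := by
      intro x
      calc adjoint Bd (Bd (Ad (A x)))
          = adjoint Bd (Bd (B (Bd (Ad (A x))))) := by rw [pB2]
      _ = adjoint Bd (Bd (Ad (A (B (Bd x))))) := by rw [hEF]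
      _ = adjoint Bd (Bd (Ad (A (B (adjoint B (adjoint Bd (Bd x))))))) := by rw [pSN]
      _ = adjoint Bd (Bd (B (adjoint B (Ad (A (adjoint Bd (Bd x))))))) := by rw [hSE]
      _ = B (Bd (Ad (A (adjoint Bd (Bd x))))) := by rw [pNS]
      _ = Ad (A (adjoint Bd (Bd x))) := by rw [← hEF, pFN]
    -- T is selfadjoint
    have hTsa : adjoint (Bd ∘L Ad ∘L A ∘L B) = Bd ∘L Ad ∘L A ∘L B := by
      simp only [adjoint_comp]
      ext x
      simp only [comp_apply]
      rw [pA4]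
      calc adjoint B (Ad (A (adjoint Bd x)))
          = adjoint B (Ad (A (adjoint Bd (Bd (B x))))) := by rw [pB7]
      _ = adjoint B (adjoint Bd (Bd (Ad (A (B x))))) := by rw [hEN]
      _ = Bd (B (Bd (Ad (A (B x))))) := by rw [pB4]
      _ = Bd (Ad (A (B x))) := by rw [pB2]
    -- conclusion via uniqueness of the orthogonal projection
    have hQT : (ABd ∘L A ∘L B) ∘L (Bd ∘L Ad ∘L A ∘L B) = ABd ∘L A ∘L B := by
      ext x; simp only [comp_apply]; rw [hCT]
    have hTQ : (Bd ∘L Ad ∘L A ∘L B) ∘L (ABd ∘L A ∘L B) = Bd ∘L Ad ∘L A ∘L B := by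
      ext x; simp only [comp_apply]; rw [pC1]
    calc ABd ∘L A ∘L B = (ABd ∘L A ∘L B) ∘L (Bd ∘L Ad ∘L A ∘L B) := hQT.symm
    _ = adjoint (adjoint ((ABd ∘L A ∘L B) ∘L (Bd ∘L Ad ∘L A ∘L B))) := (adjoint_adjoint _).symm
    _ = adjoint (adjoint (Bd ∘L Ad ∘L A ∘L B) ∘L adjoint (ABd ∘L A ∘L B)) := by
        rw [adjoint_comp]
    _ = adjoint ((Bd ∘L Ad ∘L A ∘L B) ∘L (ABd ∘L A ∘L B)) := by rw [hTsa, hC4]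
    _ = adjoint (Bd ∘L Ad ∘L A ∘L B) := by rw [hTQ]
    _ = Bd ∘L Ad ∘L A ∘L B := hTsa
end

section
/- Let A ∈ B(H₂, H₃) and B ∈ B(H₁, H₂) have closed ranges and suppose AB has closed range. Then (AB)† = B† A† if and only if both B B† A* A B = A* A B and A B B* = A B B* A† A hold. -/
open ContinuousLinearMap
set_option maxHeartbeats 1000000

local notation "⟪" x ", " y "⟫" => @inner ℂ _ _ x y

section proj
variable {H : Type*} [NormedAddCommGroup H] [InnerProductSpace ℂ H] [CompleteSpace H]

lemma sa_inner {T : H →L[ℂ] H} (h : ContinuousLinearMap.adjoint T = T) (u v : H) :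
    ⟪T u, v⟫ = ⟪u, T v⟫ := by
  conv_lhs => rw [← h]
  exact ContinuousLinearMap.adjoint_inner_left T v u

lemma proj_inner {T : H →L[ℂ] H} (hsa : ContinuousLinearMap.adjoint T = T)
    (hid : ∀ x, T (T x) = T x) (x : H) : ⟪x, T x⟫ = ⟪T x, T x⟫ := by
  rw [sa_inner hsa x (T x), hid]

lemma proj_re {T : H →L[ℂ] H} (hsa : ContinuousLinearMap.adjoint T = T)
    (hid : ∀ x, T (T x) = T x) (x : H) : Complex.re ⟪x, T x⟫ = ‖T x‖ ^ 2 := by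
  rw [proj_inner hsa hid]
  exact inner_self_eq_norm_sq (𝕜 := ℂ) (T x)

lemma proj_norm_le {T : H →L[ℂ] H} (hsa : ContinuousLinearMap.adjoint T = T)
    (hid : ∀ x, T (T x) = T x) (x : H) : ‖T x‖ ≤ ‖x‖ := by
  have h1 := proj_re hsa hid x
  have h2 : ‖⟪x, T x⟫‖ ≤ ‖x‖ * ‖T x‖ := norm_inner_le_norm x (T x)
  have h3 : Complex.re ⟪x, T x⟫ ≤ ‖⟪x, T x⟫‖ := Complex.re_le_norm _
  nlinarith [norm_nonneg (T x), norm_nonneg x]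

lemma proj_fix {T : H →L[ℂ] H} (hsa : ContinuousLinearMap.adjoint T = T)
    (hid : ∀ x, T (T x) = T x) {x : H} (hn : ‖x‖ ≤ ‖T x‖) : T x = x := by
  have h1 := proj_re hsa hid x
  have h2 : ‖x - T x‖ ^ 2 = ‖x‖ ^ 2 - 2 * Complex.re ⟪x, T x⟫ + ‖T x‖ ^ 2 :=
    @norm_sub_sq ℂ _ _ _ _ x (T x)
  have h5 : ‖x - T x‖ = 0 := by
    nlinarith [norm_nonneg (x - T x), pow_le_pow_left₀ (norm_nonneg x) hn 2,
      sq_nonneg ‖x - T x‖]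
  have := norm_eq_zero.mp h5
  rw [sub_eq_zero] at this
  exact this.symm

end proj

lemma mp_unique {H K : Type*} [NormedAddCommGroup H] [InnerProductSpace ℂ H] [CompleteSpace H]
    [NormedAddCommGroup K] [InnerProductSpace ℂ K] [CompleteSpace K]
    (C : H →L[ℂ] K) (X Y : K →L[ℂ] H) (hX : IsMPInv C X) (hY : IsMPInv C Y) : X = Y := by
  obtain ⟨x1, x2, x3, x4⟩ := hX
  obtain ⟨y1, y2, y3, y4⟩ := hY
  have x3s : ContinuousLinearMap.adjoint X ∘L ContinuousLinearMap.adjoint C = C ∘L X := by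
    rw [← adjoint_comp]; exact x3
  have y3s : ContinuousLinearMap.adjoint Y ∘L ContinuousLinearMap.adjoint C = C ∘L Y := by
    rw [← adjoint_comp]; exact y3
  have x4s : ContinuousLinearMap.adjoint C ∘L ContinuousLinearMap.adjoint X = X ∘L C := by
    rw [← adjoint_comp]; exact x4
  have y4s : ContinuousLinearMap.adjoint C ∘L ContinuousLinearMap.adjoint Y = Y ∘L C := by
    rw [← adjoint_comp]; exact y4
  have s1 : C ∘L X = (C ∘L Y) ∘L (C ∘L X) := by
    conv_lhs => rw [← y1]
    simp only [comp_assoc]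
  have s2 : C ∘L Y = (C ∘L X) ∘L (C ∘L Y) := by
    conv_lhs => rw [← x1]
    simp only [comp_assoc]
  have s3 := congrArg ContinuousLinearMap.adjoint s2
  simp only [adjoint_comp] at s3
  simp only [x3s, y3s] at s3
  have s4 : C ∘L X = C ∘L Y := by rw [s1, ← s3]
  have t1 : X ∘L C = (X ∘L C) ∘L (Y ∘L C) := by
    conv_lhs => rw [← y1]
    simp only [comp_assoc]
  have t2 : Y ∘L C = (Y ∘L C) ∘L (X ∘L C) := by
    conv_lhs => rw [← x1]
    simp only [comp_assoc]
  have t3 := congrArg ContinuousLinearMap.adjoint t2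
  simp only [adjoint_comp] at t3
  simp only [x4s, y4s] at t3
  have t4 : X ∘L C = Y ∘L C := by rw [t1, ← t3]
  calc X = X ∘L (C ∘L X) := x2.symm
    _ = X ∘L (C ∘L Y) := by rw [s4]
    _ = (X ∘L C) ∘L Y := by simp only [comp_assoc]
    _ = (Y ∘L C) ∘L Y := by rw [t4]
    _ = Y ∘L (C ∘L Y) := by simp only [comp_assoc]
    _ = Y := y2

theorem stmt13 {H₁ H₂ H₃ : Type*}
    [NormedAddCommGroup H₁] [InnerProductSpace ℂ H₁] [CompleteSpace H₁]
    [NormedAddCommGroup H₂] [InnerProductSpace ℂ H₂] [CompleteSpace H₂]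
    [NormedAddCommGroup H₃] [InnerProductSpace ℂ H₃] [CompleteSpace H₃]
    (A : H₂ →L[ℂ] H₃) (B : H₁ →L[ℂ] H₂)
    (Ad : H₃ →L[ℂ] H₂) (Bd : H₂ →L[ℂ] H₁) (ABd : H₃ →L[ℂ] H₁)
    (hAcl : IsClosed (LinearMap.range (A : H₂ →ₗ[ℂ] H₃) : Set H₃))
    (hBcl : IsClosed (LinearMap.range (B : H₁ →ₗ[ℂ] H₂) : Set H₂))
    (hABcl : IsClosed (LinearMap.range ((A ∘L B : H₁ →L[ℂ] H₃) : H₁ →ₗ[ℂ] H₃) : Set H₃))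
    (hA : IsMPInv A Ad) (hB : IsMPInv B Bd) (hAB : IsMPInv (A ∘L B) ABd) :
    ABd = Bd ∘L Ad ↔
      (B ∘L Bd ∘L ContinuousLinearMap.adjoint A ∘L A ∘L B = ContinuousLinearMap.adjoint A ∘L A ∘L B ∧
        A ∘L B ∘L ContinuousLinearMap.adjoint B = A ∘L B ∘L ContinuousLinearMap.adjoint B ∘L Ad ∘L A) := by
  obtain ⟨hA1, hA2, hA3, hA4⟩ := hA
  obtain ⟨hB1, hB2, hB3, hB4⟩ := hB
  -- pointwise Penrose identities
  have pa1 : ∀ x, A (Ad (A x)) = A x := fun x => by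
    simpa only [comp_apply] using ContinuousLinearMap.ext_iff.mp hA1 x
  have pa2 : ∀ x, Ad (A (Ad x)) = Ad x := fun x => by
    simpa only [comp_apply] using ContinuousLinearMap.ext_iff.mp hA2 x
  have pb1 : ∀ x, B (Bd (B x)) = B x := fun x => by
    simpa only [comp_apply] using ContinuousLinearMap.ext_iff.mp hB1 x
  have pb2 : ∀ x, Bd (B (Bd x)) = Bd x := fun x => by
    simpa only [comp_apply] using ContinuousLinearMap.ext_iff.mp hB2 x
  have hA3s : ContinuousLinearMap.adjoint Ad ∘L ContinuousLinearMap.adjoint A = A ∘L Ad := by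
    rw [← adjoint_comp]; exact hA3
  have hA4s : ContinuousLinearMap.adjoint A ∘L ContinuousLinearMap.adjoint Ad = Ad ∘L A := by
    rw [← adjoint_comp]; exact hA4
  have hB4s : ContinuousLinearMap.adjoint B ∘L ContinuousLinearMap.adjoint Bd = Bd ∘L B := by
    rw [← adjoint_comp]; exact hB4
  have pa3 : ∀ x, ContinuousLinearMap.adjoint Ad (ContinuousLinearMap.adjoint A x) = A (Ad x) :=
    fun x => by simpa only [comp_apply] using ContinuousLinearMap.ext_iff.mp hA3s x
  have pa4 : ∀ x, ContinuousLinearMap.adjoint A (ContinuousLinearMap.adjoint Ad x) = Ad (A x) :=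
    fun x => by simpa only [comp_apply] using ContinuousLinearMap.ext_iff.mp hA4s x
  have pb4 : ∀ x, ContinuousLinearMap.adjoint B (ContinuousLinearMap.adjoint Bd x) = Bd (B x) :=
    fun x => by simpa only [comp_apply] using ContinuousLinearMap.ext_iff.mp hB4s x
  -- inner product moves
  have iA : ∀ (u : H₂) (v : H₃), ⟪A u, v⟫ = ⟪u, ContinuousLinearMap.adjoint A v⟫ :=
    fun u v => (adjoint_inner_right A u v).symm
  have iA' : ∀ (u : H₃) (v : H₂), ⟪ContinuousLinearMap.adjoint A u, v⟫ = ⟪u, A v⟫ :=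
    fun u v => adjoint_inner_left A v u
  have iB : ∀ (u : H₁) (v : H₂), ⟪B u, v⟫ = ⟪u, ContinuousLinearMap.adjoint B v⟫ :=
    fun u v => (adjoint_inner_right B u v).symm
  have iB' : ∀ (u : H₂) (v : H₁), ⟪ContinuousLinearMap.adjoint B u, v⟫ = ⟪u, B v⟫ :=
    fun u v => adjoint_inner_left B v u
  have iAd' : ∀ (u : H₂) (v : H₃), ⟪ContinuousLinearMap.adjoint Ad u, v⟫ = ⟪u, Ad v⟫ :=
    fun u v => adjoint_inner_left Ad v u
  have iBd' : ∀ (u : H₁) (v : H₂), ⟪ContinuousLinearMap.adjoint Bd u, v⟫ = ⟪u, Bd v⟫ :=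
    fun u v => adjoint_inner_left Bd v u
  have iP : ∀ u v : H₂, ⟪B (Bd u), v⟫ = ⟪u, B (Bd v)⟫ := fun u v => by
    simpa only [comp_apply] using sa_inner hB3 u v
  have iQ : ∀ u v : H₂, ⟪Ad (A u), v⟫ = ⟪u, Ad (A v)⟫ := fun u v => by
    simpa only [comp_apply] using sa_inner hA4 u v
  have iBB : ∀ u v : H₂, ⟪B (ContinuousLinearMap.adjoint B u), v⟫
      = ⟪u, B (ContinuousLinearMap.adjoint B v)⟫ := fun u v => by
    rw [iB, iB']
  -- extra derived identities
  have hA1' : (A ∘L Ad) ∘L A = A := by rw [comp_assoc]; exact hA1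
  have pa5op : ContinuousLinearMap.adjoint A ∘L (A ∘L Ad) = ContinuousLinearMap.adjoint A := by
    conv_rhs => rw [← hA1', adjoint_comp, hA3]
  have pa5 : ∀ x, ContinuousLinearMap.adjoint A (A (Ad x)) = ContinuousLinearMap.adjoint A x :=
    fun x => by simpa only [comp_apply] using ContinuousLinearMap.ext_iff.mp pa5op x
  have pa6 : ∀ y, ContinuousLinearMap.adjoint Ad (ContinuousLinearMap.adjoint A (A y)) = A y :=
    fun y => by rw [pa3]; exact pa1 y
  have pb7op : Bd ∘L (B ∘L ContinuousLinearMap.adjoint B) = ContinuousLinearMap.adjoint B := by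
    conv_rhs => rw [← hB1, adjoint_comp, hB4, comp_assoc]
  have pb7 : ∀ x, Bd (B (ContinuousLinearMap.adjoint B x)) = ContinuousLinearMap.adjoint B x :=
    fun x => by simpa only [comp_apply] using ContinuousLinearMap.ext_iff.mp pb7op x
  have pb8 : ∀ x, B (ContinuousLinearMap.adjoint B (ContinuousLinearMap.adjoint Bd x)) = B x :=
    fun x => by rw [pb4]; exact pb1 x
  -- projections are idempotent
  have qid : ∀ y : H₂, (Ad ∘L A) ((Ad ∘L A) y) = (Ad ∘L A) y := fun y => by
    simp only [comp_apply]; exact pa2 (A y)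
  have pid : ∀ y : H₂, (B ∘L Bd) ((B ∘L Bd) y) = (B ∘L Bd) y := fun y => by
    simp only [comp_apply]; exact pb1 (Bd y)
  constructor
  · -- forward direction
    intro h
    subst h
    obtain ⟨hD1, hD2, hD3, hD4⟩ := hAB
    have pd1 : ∀ y : H₁, A (B (Bd (Ad (A (B y))))) = A (B y) := fun y => by
      simpa only [comp_apply] using ContinuousLinearMap.ext_iff.mp hD1 y
    have hF : ∀ u v : H₃, ⟪A (B (Bd (Ad u))), v⟫ = ⟪u, A (B (Bd (Ad v)))⟫ := fun u v => by
      simpa only [comp_apply] using sa_inner hD3 u v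
    have iXD : ∀ u v : H₁, ⟪Bd (Ad (A (B u))), v⟫ = ⟪u, Bd (Ad (A (B v)))⟫ := fun u v => by
      simpa only [comp_apply] using sa_inner hD4 u v
    constructor
    · -- condition (i)
      ext x
      simp only [comp_apply]
      have claim : Ad (A (B (Bd (ContinuousLinearMap.adjoint A (A (B x))))))
          = ContinuousLinearMap.adjoint A (A (B x)) := by
        apply ext_inner_right ℂ
        intro z
        calc ⟪Ad (A (B (Bd (ContinuousLinearMap.adjoint A (A (B x)))))), z⟫
            = ⟪B (Bd (ContinuousLinearMap.adjoint A (A (B x)))), Ad (A z)⟫ := iQ _ _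
          _ = ⟪ContinuousLinearMap.adjoint A (A (B x)), B (Bd (Ad (A z)))⟫ := iP _ _
          _ = ⟪A (B x), A (B (Bd (Ad (A z))))⟫ := iA' _ _
          _ = ⟪A (B (Bd (Ad (A (B x))))), A z⟫ := (hF _ _).symm
          _ = ⟪A (B x), A z⟫ := by rw [pd1 x]
          _ = ⟪ContinuousLinearMap.adjoint A (A (B x)), z⟫ := (iA' _ _).symm
      have lq := proj_norm_le hA4 qid ((B ∘L Bd) (ContinuousLinearMap.adjoint A (A (B x))))
      simp only [comp_apply, claim] at lq
      have fix := proj_fix hB3 pid (x := ContinuousLinearMap.adjoint A (A (B x)))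
        (by simpa only [comp_apply] using lq)
      simpa only [comp_apply] using fix
    · -- condition (ii)
      have hQM : ∀ y : H₃, Ad (A (B (ContinuousLinearMap.adjoint B
          (ContinuousLinearMap.adjoint A y))))
          = B (ContinuousLinearMap.adjoint B (ContinuousLinearMap.adjoint A y)) := by
        intro y
        have pdd : Bd (Ad (A (B (ContinuousLinearMap.adjoint B
            (ContinuousLinearMap.adjoint A y)))))
            = ContinuousLinearMap.adjoint B (ContinuousLinearMap.adjoint A y) := by
          apply ext_inner_right ℂ
          intro z
          calc ⟪Bd (Ad (A (B (ContinuousLinearMap.adjoint B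
              (ContinuousLinearMap.adjoint A y))))), z⟫
              = ⟪ContinuousLinearMap.adjoint B (ContinuousLinearMap.adjoint A y),
                  Bd (Ad (A (B z)))⟫ := iXD _ _
            _ = ⟪ContinuousLinearMap.adjoint A y, B (Bd (Ad (A (B z))))⟫ := iB' _ _
            _ = ⟪y, A (B (Bd (Ad (A (B z)))))⟫ := iA' _ _
            _ = ⟪y, A (B z)⟫ := by rw [pd1 z]
            _ = ⟪ContinuousLinearMap.adjoint A y, B z⟫ := (iA' _ _).symm
            _ = ⟪ContinuousLinearMap.adjoint B (ContinuousLinearMap.adjoint A y), z⟫ :=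
                (iB' _ _).symm
        have hm : B (Bd (Ad (A (B (ContinuousLinearMap.adjoint B
            (ContinuousLinearMap.adjoint A y))))))
            = B (ContinuousLinearMap.adjoint B (ContinuousLinearMap.adjoint A y)) :=
          congrArg (fun t => B t) pdd
        have lp := proj_norm_le hB3 pid ((Ad ∘L A) (B (ContinuousLinearMap.adjoint B
          (ContinuousLinearMap.adjoint A y))))
        simp only [comp_apply, hm] at lp
        have fix := proj_fix hA4 qid (x := B (ContinuousLinearMap.adjoint B
          (ContinuousLinearMap.adjoint A y))) (by simpa only [comp_apply] using lp)
        simpa only [comp_apply] using fix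
      ext x
      simp only [comp_apply]
      apply ext_inner_right ℂ
      intro z
      calc ⟪A (B (ContinuousLinearMap.adjoint B x)), z⟫
          = ⟪B (ContinuousLinearMap.adjoint B x), ContinuousLinearMap.adjoint A z⟫ := iA _ _
        _ = ⟪x, B (ContinuousLinearMap.adjoint B (ContinuousLinearMap.adjoint A z))⟫ := iBB _ _
        _ = ⟪x, Ad (A (B (ContinuousLinearMap.adjoint B
            (ContinuousLinearMap.adjoint A z))))⟫ := by rw [hQM z]
        _ = ⟪Ad (A x), B (ContinuousLinearMap.adjoint B
            (ContinuousLinearMap.adjoint A z))⟫ := (iQ _ _).symm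
        _ = ⟪B (ContinuousLinearMap.adjoint B (Ad (A x))),
            ContinuousLinearMap.adjoint A z⟫ := (iBB _ _).symm
        _ = ⟪A (B (ContinuousLinearMap.adjoint B (Ad (A x)))), z⟫ := (iA _ _).symm
  · -- backward direction
    rintro ⟨h1, h2⟩
    have p1 : ∀ x : H₁, B (Bd (ContinuousLinearMap.adjoint A (A (B x))))
        = ContinuousLinearMap.adjoint A (A (B x)) := fun x => by
      simpa only [comp_apply] using ContinuousLinearMap.ext_iff.mp h1 x
    have p2 : ∀ x : H₂, A (B (ContinuousLinearMap.adjoint B x))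
        = A (B (ContinuousLinearMap.adjoint B (Ad (A x)))) := fun x => by
      simpa only [comp_apply] using ContinuousLinearMap.ext_iff.mp h2 x
    have pα : ∀ y : H₂, B (Bd (ContinuousLinearMap.adjoint A (A (B (Bd y)))))
        = ContinuousLinearMap.adjoint A (A (B (Bd y))) := fun y => p1 (Bd y)
    have pγ : ∀ x : H₂, Ad (A (B (ContinuousLinearMap.adjoint B x)))
        = Ad (A (B (ContinuousLinearMap.adjoint B (Ad (A x))))) := fun x =>
      congrArg (fun t => Ad t) (p2 x)
    have pc1 : ∀ x : H₂, ContinuousLinearMap.adjoint A (A (B (Bd x)))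
        = B (Bd (ContinuousLinearMap.adjoint A (A x))) := fun x => by
      apply ext_inner_right ℂ
      intro y
      calc ⟪ContinuousLinearMap.adjoint A (A (B (Bd x))), y⟫
          = ⟪B (Bd (ContinuousLinearMap.adjoint A (A (B (Bd x))))), y⟫ := by rw [pα x]
        _ = ⟪ContinuousLinearMap.adjoint A (A (B (Bd x))), B (Bd y)⟫ := iP _ _
        _ = ⟪A (B (Bd x)), A (B (Bd y))⟫ := iA' _ _
        _ = ⟪B (Bd x), ContinuousLinearMap.adjoint A (A (B (Bd y)))⟫ := iA _ _
        _ = ⟪x, B (Bd (ContinuousLinearMap.adjoint A (A (B (Bd y)))))⟫ := iP _ _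
        _ = ⟪x, ContinuousLinearMap.adjoint A (A (B (Bd y)))⟫ := by rw [pα y]
        _ = ⟪A x, A (B (Bd y))⟫ := (iA _ _).symm
        _ = ⟪ContinuousLinearMap.adjoint A (A x), B (Bd y)⟫ := (iA' _ _).symm
        _ = ⟪B (Bd (ContinuousLinearMap.adjoint A (A x))), y⟫ := (iP _ _).symm
    have pc2 : ∀ x : H₂, Ad (A (B (ContinuousLinearMap.adjoint B x)))
        = B (ContinuousLinearMap.adjoint B (Ad (A x))) := fun x => by
      apply ext_inner_right ℂ
      intro y
      calc ⟪Ad (A (B (ContinuousLinearMap.adjoint B x))), y⟫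
          = ⟪Ad (A (B (ContinuousLinearMap.adjoint B (Ad (A x))))), y⟫ := by rw [pγ x]
        _ = ⟪B (ContinuousLinearMap.adjoint B (Ad (A x))), Ad (A y)⟫ := iQ _ _
        _ = ⟪Ad (A x), B (ContinuousLinearMap.adjoint B (Ad (A y)))⟫ := iBB _ _
        _ = ⟪x, Ad (A (B (ContinuousLinearMap.adjoint B (Ad (A y)))))⟫ := iQ _ _
        _ = ⟪x, Ad (A (B (ContinuousLinearMap.adjoint B y)))⟫ := by rw [← pγ y]
        _ = ⟪Ad (A x), B (ContinuousLinearMap.adjoint B y)⟫ := (iQ _ _).symm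
        _ = ⟪B (ContinuousLinearMap.adjoint B (Ad (A x))), y⟫ := (iBB _ _).symm
    have pII : ∀ x : H₂, B (Bd (Ad (A (B (Bd x))))) = Ad (A (B (Bd x))) := fun x => by
      have e : Ad (A (B (Bd x))) = B (ContinuousLinearMap.adjoint B
          (Ad (A (ContinuousLinearMap.adjoint Bd (Bd x))))) := by
        conv_lhs => rw [← pb8 (Bd x)]
        exact pc2 _
      rw [e, pb7]
    have hQPsa : ∀ u v : H₂, ⟪Ad (A (B (Bd u))), v⟫ = ⟪u, Ad (A (B (Bd v)))⟫ := fun u v => by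
      calc ⟪Ad (A (B (Bd u))), v⟫
          = ⟪B (Bd (Ad (A (B (Bd u))))), v⟫ := by rw [pII u]
        _ = ⟪Ad (A (B (Bd u))), B (Bd v)⟫ := iP _ _
        _ = ⟪B (Bd u), Ad (A (B (Bd v)))⟫ := iQ _ _
        _ = ⟪B (Bd u), B (Bd (Ad (A (B (Bd v)))))⟫ := by rw [pII v]
        _ = ⟪u, B (Bd (B (Bd (Ad (A (B (Bd v)))))))⟫ := iP _ _
        _ = ⟪u, B (Bd (Ad (A (B (Bd v)))))⟫ := by rw [pb1 (Bd (Ad (A (B (Bd v)))))]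
        _ = ⟪u, Ad (A (B (Bd v)))⟫ := by rw [pII v]
    have pcomm : ∀ x : H₂, B (Bd (Ad (A x))) = Ad (A (B (Bd x))) := fun x => by
      apply ext_inner_right ℂ
      intro y
      calc ⟪B (Bd (Ad (A x))), y⟫
          = ⟪Ad (A x), B (Bd y)⟫ := iP _ _
        _ = ⟪x, Ad (A (B (Bd y)))⟫ := iQ _ _
        _ = ⟪Ad (A (B (Bd x))), y⟫ := (hQPsa x y).symm
    have E1 : (A ∘L B) ∘L (Bd ∘L Ad) ∘L (A ∘L B) = A ∘L B := by
      ext x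
      simp only [comp_apply]
      rw [pcomm (B x), pb1 x, pa1 (B x)]
    have E2 : (Bd ∘L Ad) ∘L (A ∘L B) ∘L (Bd ∘L Ad) = Bd ∘L Ad := by
      ext x
      simp only [comp_apply]
      rw [← pcomm (Ad x), pa2 x, pb2 (Ad x)]
    have E3' : ∀ x : H₃, A (B (Bd (Ad x)))
        = ContinuousLinearMap.adjoint Ad (B (Bd (ContinuousLinearMap.adjoint A x))) := fun x => by
      conv_lhs => rw [← pa6 (B (Bd (Ad x)))]
      rw [pc1 (Ad x), pa5 x]
    have E3 : ContinuousLinearMap.adjoint ((A ∘L B) ∘L (Bd ∘L Ad)) = (A ∘L B) ∘L (Bd ∘L Ad) := by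
      refine ((eq_adjoint_iff _ _).mpr ?_).symm
      intro u v
      simp only [comp_apply]
      calc ⟪A (B (Bd (Ad u))), v⟫
          = ⟪ContinuousLinearMap.adjoint Ad (B (Bd (ContinuousLinearMap.adjoint A u))), v⟫ := by
            rw [E3' u]
        _ = ⟪B (Bd (ContinuousLinearMap.adjoint A u)), Ad v⟫ := iAd' _ _
        _ = ⟪ContinuousLinearMap.adjoint A u, B (Bd (Ad v))⟫ := iP _ _
        _ = ⟪u, A (B (Bd (Ad v)))⟫ := iA' _ _
    have E4' : ∀ x : H₁, Bd (Ad (A (B x)))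
        = ContinuousLinearMap.adjoint B (Ad (A (ContinuousLinearMap.adjoint Bd x))) := fun x => by
      conv_lhs => rw [← pb8 x]
      rw [pc2 (ContinuousLinearMap.adjoint Bd x), pb7]
    have E4 : ContinuousLinearMap.adjoint ((Bd ∘L Ad) ∘L (A ∘L B)) = (Bd ∘L Ad) ∘L (A ∘L B) := by
      refine ((eq_adjoint_iff _ _).mpr ?_).symm
      intro u v
      simp only [comp_apply]
      calc ⟪Bd (Ad (A (B u))), v⟫
          = ⟪ContinuousLinearMap.adjoint B (Ad (A (ContinuousLinearMap.adjoint Bd u))), v⟫ := by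
            rw [E4' u]
        _ = ⟪Ad (A (ContinuousLinearMap.adjoint Bd u)), B v⟫ := iB' _ _
        _ = ⟪ContinuousLinearMap.adjoint Bd u, Ad (A (B v))⟫ := iQ _ _
        _ = ⟪u, Bd (Ad (A (B v)))⟫ := iBd' _ _
    exact mp_unique (A ∘L B) ABd (Bd ∘L Ad) hAB ⟨E1, E2, E3, E4⟩
end

section
/- Let A ∈ B(H₂, H₃) and B ∈ B(H₁, H₂) have closed ranges and suppose AB has closed range. Then A† = B (AB)† if and only if R(A*) = R(B B* A*). -/
open ContinuousLinearMap

section Aux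

variable {E F : Type*} [NormedAddCommGroup E] [InnerProductSpace ℂ E] [CompleteSpace E]
  [NormedAddCommGroup F] [InnerProductSpace ℂ F] [CompleteSpace F]

lemma range_comp_eq {G : Type*} [NormedAddCommGroup G] [InnerProductSpace ℂ G]
    (f : F →L[ℂ] G) (g : E →L[ℂ] F) :
    LinearMap.range ((f ∘L g : E →L[ℂ] G) : E →ₗ[ℂ] G) = Submodule.map (f : F →ₗ[ℂ] G) (LinearMap.range (g : E →ₗ[ℂ] F)) := by
  ext x
  simp only [LinearMap.mem_range, Submodule.mem_map, ContinuousLinearMap.comp_apply]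
  constructor
  · rintro ⟨y, rfl⟩; exact ⟨g y, ⟨y, rfl⟩, rfl⟩
  · rintro ⟨z, ⟨y, rfl⟩, rfl⟩; exact ⟨y, rfl⟩

lemma mp_adj1 (T : E →L[ℂ] F) (Td : F →L[ℂ] E) (h : IsMPInv T Td) :
    (Td ∘L T) ∘L ContinuousLinearMap.adjoint T = ContinuousLinearMap.adjoint T := by
  conv_rhs => rw [← h.1, adjoint_comp, h.2.2.2]

lemma range_adj_eq (T : E →L[ℂ] F) (Td : F →L[ℂ] E) (h : IsMPInv T Td) :
    LinearMap.range ((ContinuousLinearMap.adjoint T : F →L[ℂ] E) : F →ₗ[ℂ] E) = LinearMap.range (Td : F →ₗ[ℂ] E) := by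
  have e1 := mp_adj1 T Td h
  have e2 : Td ∘L T = ContinuousLinearMap.adjoint T ∘L ContinuousLinearMap.adjoint Td := by
    rw [← h.2.2.2, adjoint_comp]
  have e3 : (ContinuousLinearMap.adjoint T ∘L ContinuousLinearMap.adjoint Td) ∘L Td = Td := by
    rw [← e2]; exact h.2.1
  apply le_antisymm
  · rintro x ⟨y, rfl⟩
    have := DFunLike.congr_fun e1 y
    simp only [ContinuousLinearMap.comp_apply] at this
    exact ⟨T (ContinuousLinearMap.adjoint T y), this⟩
  · rintro x ⟨y, rfl⟩
    have := DFunLike.congr_fun e3 y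
    simp only [ContinuousLinearMap.comp_apply] at this
    exact ⟨ContinuousLinearMap.adjoint Td (Td y), this⟩

end Aux

theorem stmt15 {H₁ H₂ H₃ : Type*}
    [NormedAddCommGroup H₁] [InnerProductSpace ℂ H₁] [CompleteSpace H₁]
    [NormedAddCommGroup H₂] [InnerProductSpace ℂ H₂] [CompleteSpace H₂]
    [NormedAddCommGroup H₃] [InnerProductSpace ℂ H₃] [CompleteSpace H₃]
    (A : H₂ →L[ℂ] H₃) (B : H₁ →L[ℂ] H₂)
    (Ad : H₃ →L[ℂ] H₂) (Bd : H₂ →L[ℂ] H₁) (ABd : H₃ →L[ℂ] H₁)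
    (hAcl : IsClosed (LinearMap.range (A : H₂ →ₗ[ℂ] H₃) : Set H₃))
    (hBcl : IsClosed (LinearMap.range (B : H₁ →ₗ[ℂ] H₂) : Set H₂))
    (hABcl : IsClosed (LinearMap.range ((A ∘L B : H₁ →L[ℂ] H₃) : H₁ →ₗ[ℂ] H₃) : Set H₃))
    (hA : IsMPInv A Ad) (hB : IsMPInv B Bd) (hAB : IsMPInv (A ∘L B) ABd) :
    Ad = B ∘L ABd ↔ LinearMap.range ((ContinuousLinearMap.adjoint A : H₃ →L[ℂ] H₂) : H₃ →ₗ[ℂ] H₂) = LinearMap.range ((B ∘L ContinuousLinearMap.adjoint B ∘L ContinuousLinearMap.adjoint A : H₃ →L[ℂ] H₂) : H₃ →ₗ[ℂ] H₂) := by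
  set A' := ContinuousLinearMap.adjoint A with hA'
  set B' := ContinuousLinearMap.adjoint B with hB'
  have rA : LinearMap.range (A' : H₃ →ₗ[ℂ] H₂) = LinearMap.range (Ad : H₃ →ₗ[ℂ] H₂) := range_adj_eq A Ad hA
  have rC : LinearMap.range (ABd : H₃ →ₗ[ℂ] H₁) = LinearMap.range ((B' ∘L A' : H₃ →L[ℂ] H₁) : H₃ →ₗ[ℂ] H₁) := by
    rw [← range_adj_eq (A ∘L B) ABd hAB, adjoint_comp]
  constructor
  · intro h
    rw [rA, h, range_comp_eq, rC, ← range_comp_eq]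
  · intro h
    obtain ⟨a1, a2, a3, a4⟩ := hA
    obtain ⟨b1, b2, b3, b4⟩ := hB
    obtain ⟨c1, c2, c3, c4⟩ := hAB
    -- fact1 : (B ∘L Bd) ∘L A' = A'
    have fact1 : (B ∘L Bd) ∘L A' = A' := by
      ext y
      have hy : A' y ∈ LinearMap.range ((B ∘L B' ∘L A' : H₃ →L[ℂ] H₂) : H₃ →ₗ[ℂ] H₂) := h ▸ LinearMap.mem_range_self (A' : H₃ →ₗ[ℂ] H₂) y
      obtain ⟨u, hu⟩ := hy
      simp only [ContinuousLinearMap.comp_apply] at hu ⊢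
      rw [← hu]
      have := DFunLike.congr_fun b1 (B' (A' u))
      simpa only [ContinuousLinearMap.coe_coe, ContinuousLinearMap.comp_apply] using this
    -- fact1' : A ∘L (B ∘L Bd) = A
    have fact1' : A ∘L (B ∘L Bd) = A := by
      have := congrArg ContinuousLinearMap.adjoint fact1
      rwa [adjoint_comp, adjoint_adjoint, b3] at this
    -- idA pointwise : Ad (A (A' z)) = A' z
    have idA : ∀ z, Ad (A (A' z)) = A' z := by
      intro z
      have := DFunLike.congr_fun (mp_adj1 A Ad ⟨a1, a2, a3, a4⟩) z
      simpa only [ContinuousLinearMap.comp_apply] using this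
    -- fact2 pointwise : Ad (A (B (B' (A' y)))) = B (B' (A' y))
    have fact2 : ∀ y, Ad (A (B (B' (A' y)))) = B (B' (A' y)) := by
      intro y
      have hy : B (B' (A' y)) ∈ LinearMap.range (A' : H₃ →ₗ[ℂ] H₂) := by
        rw [h]
        exact ⟨y, rfl⟩
      obtain ⟨z, hz⟩ := hy
      rw [← hz]
      exact idA z
    -- key2 : ((A ∘L B) ∘L ABd) ∘L A = A
    have key2 : ((A ∘L B) ∘L ABd) ∘L A = A := by
      ext x
      have hax : A x = (A ∘L B) (Bd x) := by
        have := DFunLike.congr_fun fact1' x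
        simp only [ContinuousLinearMap.comp_apply] at this ⊢
        exact this.symm
      simp only [ContinuousLinearMap.comp_apply]
      rw [show A x = A (B (Bd x)) from by simpa only [ContinuousLinearMap.comp_apply] using hax]
      have := DFunLike.congr_fun c1 (Bd x)
      simpa only [ContinuousLinearMap.comp_apply] using this
    -- cfac : ABd = ((B' ∘L A') ∘L adjoint ABd) ∘L ABd
    have e2c : ABd ∘L (A ∘L B) = (B' ∘L A') ∘L ContinuousLinearMap.adjoint ABd := by
      rw [← c4, adjoint_comp, adjoint_comp]
    have cfac : ((B' ∘L A') ∘L ContinuousLinearMap.adjoint ABd) ∘L ABd = ABd := by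
      rw [← e2c]; exact c2
    -- stepa : Ad (A (B (ABd w))) = B (ABd w)
    have stepa : ∀ w, Ad (A (B (ABd w))) = B (ABd w) := by
      intro w
      have hw := DFunLike.congr_fun cfac w
      simp only [ContinuousLinearMap.comp_apply] at hw
      rw [← hw]
      exact fact2 _
    -- key4 : B (ABd (A y)) = Ad (A y)
    have key4 : ∀ y, B (ABd (A y)) = Ad (A y) := by
      intro y
      have h2 := DFunLike.congr_fun key2 y
      simp only [ContinuousLinearMap.comp_apply] at h2
      calc B (ABd (A y)) = Ad (A (B (ABd (A y)))) := (stepa (A y)).symm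
        _ = Ad (A y) := by rw [h2]
    -- pa : A' ∘L ((A ∘L B) ∘L ABd) = A'
    have pa : A' ∘L ((A ∘L B) ∘L ABd) = A' := by
      have := congrArg ContinuousLinearMap.adjoint key2
      rwa [adjoint_comp, c3, ← hA'] at this
    -- adfac : Ad = Ad ∘L (adjoint Ad ∘L A')
    have aAd : A ∘L Ad = ContinuousLinearMap.adjoint Ad ∘L A' := by
      rw [← a3, adjoint_comp]
    have adfac : Ad ∘L (ContinuousLinearMap.adjoint Ad ∘L A') = Ad := by
      rw [← aAd]; exact a2
    -- conclude
    ext y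
    simp only [ContinuousLinearMap.comp_apply]
    have step1 : B (ABd y) = Ad (A (B (ABd y))) := (stepa y).symm
    have step2 : Ad (A (B (ABd y))) = Ad y := by
      have g1 := DFunLike.congr_fun adfac ((A ∘L B) (ABd y))
      have g2 := DFunLike.congr_fun adfac y
      have g3 := DFunLike.congr_fun pa y
      simp only [ContinuousLinearMap.comp_apply] at g1 g2 g3
      rw [← g1, g3]
      exact g2
    exact (step1.trans step2).symm
end

section
/- Let A ∈ B(H₂, H₃) and B ∈ B(H₁, H₂) have closed ranges and suppose AB has closed range. Then (AB)† = (A† A B)† A† if and only if R(A A* A B) = R(AB). -/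
open ContinuousLinearMap

local notation "⟪" x ", " y "⟫" => @inner ℂ _ _ x y

private lemma sap {H K : Type*} [NormedAddCommGroup H] [InnerProductSpace ℂ H] [CompleteSpace H]
    [NormedAddCommGroup K] [InnerProductSpace ℂ K] [CompleteSpace K]
    (P : H →L[ℂ] K) (Q : K →L[ℂ] H)
    (h : ContinuousLinearMap.adjoint (P ∘L Q) = P ∘L Q) (x y : K) :
    ⟪P (Q x), y⟫ = ⟪x, P (Q y)⟫ := by
  have h' := ContinuousLinearMap.adjoint_inner_left (P ∘L Q) y x
  rw [h] at h'
  simpa using h'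

private lemma mp_unique_s16 {H K : Type*} [NormedAddCommGroup H] [InnerProductSpace ℂ H]
    [CompleteSpace H] [NormedAddCommGroup K] [InnerProductSpace ℂ K] [CompleteSpace K]
    {D : H →L[ℂ] K} {Y₁ Y₂ : K →L[ℂ] H} (h₁ : IsMPInv D Y₁) (h₂ : IsMPInv D Y₂) :
    Y₁ = Y₂ := by
  obtain ⟨d1, d2, d3, d4⟩ := h₁
  obtain ⟨e1, e2, e3, e4⟩ := h₂
  have d1p : ∀ x, D (Y₁ (D x)) = D x := fun x => by simpa using DFunLike.congr_fun d1 x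
  have e1p : ∀ x, D (Y₂ (D x)) = D x := fun x => by simpa using DFunLike.congr_fun e1 x
  have d2p : ∀ x, Y₁ (D (Y₁ x)) = Y₁ x := fun x => by simpa using DFunLike.congr_fun d2 x
  have e2p : ∀ x, Y₂ (D (Y₂ x)) = Y₂ x := fun x => by simpa using DFunLike.congr_fun e2 x
  have sd3 : ∀ x y, ⟪D (Y₁ x), y⟫ = ⟪x, D (Y₁ y)⟫ := sap D Y₁ d3
  have se3 : ∀ x y, ⟪D (Y₂ x), y⟫ = ⟪x, D (Y₂ y)⟫ := sap D Y₂ e3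
  have sd4 : ∀ x y, ⟪Y₁ (D x), y⟫ = ⟪x, Y₁ (D y)⟫ := sap Y₁ D d4
  have se4 : ∀ x y, ⟪Y₂ (D x), y⟫ = ⟪x, Y₂ (D y)⟫ := sap Y₂ D e4
  have step1 : ∀ z, D (Y₁ z) = D (Y₂ z) := fun z => ext_inner_right ℂ fun v => by
    calc ⟪D (Y₁ z), v⟫ = ⟪D (Y₂ (D (Y₁ z))), v⟫ := by rw [e1p]
    _ = ⟪D (Y₁ z), D (Y₂ v)⟫ := se3 _ v
    _ = ⟪z, D (Y₁ (D (Y₂ v)))⟫ := sd3 z _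
    _ = ⟪z, D (Y₂ v)⟫ := by rw [d1p]
    _ = ⟪D (Y₂ z), v⟫ := (se3 z v).symm
  have step2 : ∀ z, Y₁ (D z) = Y₂ (D z) := fun z => ext_inner_right ℂ fun v => by
    calc ⟪Y₁ (D z), v⟫ = ⟪Y₁ (D (Y₂ (D z))), v⟫ := by rw [e1p]
    _ = ⟪Y₂ (D z), Y₁ (D v)⟫ := sd4 _ v
    _ = ⟪z, Y₂ (D (Y₁ (D v)))⟫ := se4 z _
    _ = ⟪z, Y₂ (D v)⟫ := by rw [d1p]
    _ = ⟪Y₂ (D z), v⟫ := (se4 z v).symm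
  ext z
  calc Y₁ z = Y₁ (D (Y₁ z)) := (d2p z).symm
  _ = Y₁ (D (Y₂ z)) := by rw [step1]
  _ = Y₂ (D (Y₂ z)) := step2 _
  _ = Y₂ z := e2p z

set_option maxHeartbeats 1000000 in
theorem stmt16 {H₁ H₂ H₃ : Type*}
    [NormedAddCommGroup H₁] [InnerProductSpace ℂ H₁] [CompleteSpace H₁]
    [NormedAddCommGroup H₂] [InnerProductSpace ℂ H₂] [CompleteSpace H₂]
    [NormedAddCommGroup H₃] [InnerProductSpace ℂ H₃] [CompleteSpace H₃]
    (A : H₂ →L[ℂ] H₃) (B : H₁ →L[ℂ] H₂)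
    (Ad : H₃ →L[ℂ] H₂) (Bd : H₂ →L[ℂ] H₁) (ABd : H₃ →L[ℂ] H₁)
    (hAcl : IsClosed (LinearMap.range (A : H₂ →ₗ[ℂ] H₃) : Set H₃))
    (hBcl : IsClosed (LinearMap.range (B : H₁ →ₗ[ℂ] H₂) : Set H₂))
    (hABcl : IsClosed (LinearMap.range ((A ∘L B : H₁ →L[ℂ] H₃) : H₁ →ₗ[ℂ] H₃) : Set H₃))
    (hA : IsMPInv A Ad) (hB : IsMPInv B Bd) (hAB : IsMPInv (A ∘L B) ABd)
    (X : H₂ →L[ℂ] H₁) (hX : IsMPInv (Ad ∘L A ∘L B) X) :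
    ABd = X ∘L Ad ↔
      LinearMap.range ((A ∘L ContinuousLinearMap.adjoint A ∘L A ∘L B : H₁ →L[ℂ] H₃) : H₁ →ₗ[ℂ] H₃) = LinearMap.range ((A ∘L B : H₁ →L[ℂ] H₃) : H₁ →ₗ[ℂ] H₃) := by
  -- pointwise facts
  have a1 : ∀ x, A (Ad (A x)) = A x := fun x => by simpa using DFunLike.congr_fun hA.1 x
  have a2 : ∀ x, Ad (A (Ad x)) = Ad x := fun x => by simpa using DFunLike.congr_fun hA.2.1 x
  have ab1 : ∀ x, A (B (ABd (A (B x)))) = A (B x) := fun x => by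
    simpa using DFunLike.congr_fun hAB.1 x
  have x1p : ∀ x, Ad (A (B (X (Ad (A (B x)))))) = Ad (A (B x)) := fun x => by
    simpa using DFunLike.congr_fun hX.1 x
  have x2p : ∀ x, X (Ad (A (B (X x)))) = X x := fun x => by
    simpa using DFunLike.congr_fun hX.2.1 x
  have sa4 : ∀ x y, ⟪Ad (A x), y⟫ = ⟪x, Ad (A y)⟫ := sap Ad A hA.2.2.2
  have sab3 : ∀ x y, ⟪A (B (ABd x)), y⟫ = ⟪x, A (B (ABd y))⟫ := fun x y => by
    simpa using sap (A ∘L B) ABd hAB.2.2.1 x y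
  have sx3 : ∀ x y, ⟪Ad (A (B (X x))), y⟫ = ⟪x, Ad (A (B (X y)))⟫ := fun x y => by
    simpa using sap (Ad ∘L A ∘L B) X hX.2.2.1 x y
  have f1 : ∀ x, Ad (A (ContinuousLinearMap.adjoint A x)) = ContinuousLinearMap.adjoint A x :=
    fun x => ext_inner_right ℂ fun v => by
      calc ⟪Ad (A (ContinuousLinearMap.adjoint A x)), v⟫
          = ⟪ContinuousLinearMap.adjoint A x, Ad (A v)⟫ := sa4 _ v
      _ = ⟪x, A (Ad (A v))⟫ := adjoint_inner_left A (Ad (A v)) x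
      _ = ⟪x, A v⟫ := by rw [a1]
      _ = ⟪ContinuousLinearMap.adjoint A x, v⟫ := (adjoint_inner_left A v x).symm
  have f3 : ∀ x, ContinuousLinearMap.adjoint Ad (ContinuousLinearMap.adjoint A x) = A (Ad x) := by
    have h := hA.2.2.1
    rw [adjoint_comp] at h
    exact fun x => by simpa using DFunLike.congr_fun h x
  have f4 : ∀ x, ContinuousLinearMap.adjoint A (ContinuousLinearMap.adjoint Ad x) = Ad (A x) := by
    have h := hA.2.2.2
    rw [adjoint_comp] at h
    exact fun x => by simpa using DFunLike.congr_fun h x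
  have gaa : ∀ x, ContinuousLinearMap.adjoint Ad (Ad (A (ContinuousLinearMap.adjoint A x)))
      = A (Ad x) := fun x => by rw [f1, f3]
  have aag : ∀ x, A (ContinuousLinearMap.adjoint A (ContinuousLinearMap.adjoint Ad (Ad x)))
      = A (Ad x) := fun x => by rw [f4, a1]
  have abxc : ∀ u, A (B (X (Ad (A (B u))))) = A (B u) := fun u => by
    rw [← a1 (B (X (Ad (A (B u))))), x1p, a1]
  constructor
  · -- forward direction
    intro hEq
    have habd : ∀ z, ABd z = X (Ad z) := fun z => by rw [hEq]; rfl
    have aF : ∀ y, A (B (ABd (ContinuousLinearMap.adjoint Ad (Ad (A (B y))))))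
        = ContinuousLinearMap.adjoint Ad (Ad (A (B y))) := fun y =>
      ext_inner_right ℂ fun v => by
        rw [sab3, habd v, adjoint_inner_left, adjoint_inner_left, ← sx3, x1p]
    have bF : ∀ z, A (B (ABd (ContinuousLinearMap.adjoint Ad (Ad z))))
        = ContinuousLinearMap.adjoint Ad (Ad (A (B (ABd z)))) := fun z =>
      ext_inner_right ℂ fun w => by
        rw [sab3, adjoint_inner_left, adjoint_inner_left, habd w, ← sx3, habd z]
    apply Submodule.ext
    intro y
    simp only [LinearMap.mem_range, coe_comp', Function.comp_apply]
    constructor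
    · rintro ⟨x, rfl⟩
      -- show A (A† (A (B x))) ∈ range (A ∘ B)
      have hGW : ContinuousLinearMap.adjoint Ad (Ad (A (ContinuousLinearMap.adjoint A (A (B x)))))
          = A (B x) := by rw [gaa, a1]
      have hGEW : ContinuousLinearMap.adjoint Ad
          (Ad (A (B (ABd (A (ContinuousLinearMap.adjoint A (A (B x)))))))) = A (B x) := by
        rw [← bF, hGW, ab1]
      have hv : ContinuousLinearMap.adjoint Ad
          (Ad (A (ContinuousLinearMap.adjoint A (A (B x)))
            - A (B (ABd (A (ContinuousLinearMap.adjoint A (A (B x)))))))) = 0 := by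
        rw [map_sub, map_sub, hGW, hGEW, sub_self]
      have hAdv : A (Ad (A (ContinuousLinearMap.adjoint A (A (B x)))
            - A (B (ABd (A (ContinuousLinearMap.adjoint A (A (B x))))))))
          = A (ContinuousLinearMap.adjoint A (A (B x)))
            - A (B (ABd (A (ContinuousLinearMap.adjoint A (A (B x)))))) := by
        rw [map_sub, map_sub, f1, a1]
      have h0 := aag (A (ContinuousLinearMap.adjoint A (A (B x)))
            - A (B (ABd (A (ContinuousLinearMap.adjoint A (A (B x)))))))
      rw [hv, map_zero, map_zero, hAdv] at h0
      refine ⟨ABd (A (ContinuousLinearMap.adjoint A (A (B x)))), ?_⟩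
      have := sub_eq_zero.mp h0.symm
      exact this.symm
    · rintro ⟨x, rfl⟩
      refine ⟨ABd (ContinuousLinearMap.adjoint Ad (Ad (A (B x)))), ?_⟩
      simp only [ContinuousLinearMap.coe_coe, coe_comp', Function.comp_apply]
      rw [aF x, aag, a1]
  · -- backward direction
    intro h
    have hsub : ∀ x, ∃ w, A (ContinuousLinearMap.adjoint A (A (B w))) = A (B x) := by
      intro x
      have hm : (A ∘L B) x ∈
          LinearMap.range ((A ∘L ContinuousLinearMap.adjoint A ∘L A ∘L B : H₁ →L[ℂ] H₃) : H₁ →ₗ[ℂ] H₃) := by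
        rw [h]; exact LinearMap.mem_range_self _ x
      obtain ⟨w, hw⟩ := hm
      exact ⟨w, by simpa using hw⟩
    have ii' : ∀ y, A (B (ABd (ContinuousLinearMap.adjoint Ad (Ad (A (B y))))))
        = ContinuousLinearMap.adjoint Ad (Ad (A (B y))) := by
      intro y
      obtain ⟨w, hw⟩ := hsub y
      have h2 : ContinuousLinearMap.adjoint Ad (Ad (A (B y))) = A (B w) := by
        have t : ContinuousLinearMap.adjoint Ad
            (Ad (A (ContinuousLinearMap.adjoint A (A (B w))))) = A (B w) := by rw [gaa, a1]
        rw [hw] at t; exact t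
      rw [h2, ab1]
    have hEv : ∀ z, A (B (ABd (z - A (B (ABd z))))) = 0 := fun z => by
      rw [map_sub, map_sub, map_sub, ab1, sub_self]
    have zeroF : ∀ z, Ad (A (B (X (Ad (z - A (B (ABd z))))))) = 0 := by
      intro z
      have key : ∀ y', ⟪Ad (z - A (B (ABd z))), Ad (A (B y'))⟫ = 0 := fun y' => by
        rw [← adjoint_inner_right, ← ii' y', ← sab3, hEv z, inner_zero_left]
      have hz : ⟪Ad (A (B (X (Ad (z - A (B (ABd z))))))),
          Ad (A (B (X (Ad (z - A (B (ABd z)))))))⟫ = 0 := by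
        rw [sx3]
        exact key _
      exact inner_self_eq_zero.mp hz
    have TE : ∀ z, A (B (X (Ad z))) = A (B (ABd z)) := by
      intro z
      have h1 : A (B (X (Ad z))) - A (B (X (Ad (A (B (ABd z)))))) = 0 := by
        rw [← map_sub, ← map_sub, ← map_sub, ← map_sub,
          ← a1 (B (X (Ad (z - A (B (ABd z)))))), zeroF z, map_zero]
      have h2 : A (B (X (Ad (A (B (ABd z)))))) = A (B (ABd z)) := abxc (ABd z)
      calc A (B (X (Ad z)))
          = (A (B (X (Ad z))) - A (B (X (Ad (A (B (ABd z))))))) +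
            A (B (X (Ad (A (B (ABd z)))))) := by abel
      _ = A (B (ABd z)) := by rw [h1, h2, zero_add]
    have hY : IsMPInv (A ∘L B) (X ∘L Ad) := by
      refine ⟨?_, ?_, ?_, ?_⟩
      · ext x; exact abxc x
      · ext z; exact x2p (Ad z)
      · have hop : (A ∘L B) ∘L (X ∘L Ad) = (A ∘L B) ∘L ABd := by
          ext z; exact TE z
        rw [hop]; exact hAB.2.2.1
      · have hop2 : (X ∘L Ad) ∘L (A ∘L B) = X ∘L Ad ∘L A ∘L B := by
          ext z; rfl
        rw [hop2]; exact hX.2.2.2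
    exact mp_unique_s16 hAB hY
end

section
/- Let A ∈ B(H₂, H₃) and B ∈ B(H₁, H₂) have closed ranges and suppose AB has closed range. Then (AB)† = B† A† if and only if R(A* A B B*) = R(B B* A* A). -/
open ContinuousLinearMap
open scoped InnerProductSpace

section helpers
variable {E F : Type*}
  [NormedAddCommGroup E] [InnerProductSpace ℂ E] [CompleteSpace E]
  [NormedAddCommGroup F] [InnerProductSpace ℂ F] [CompleteSpace F]

lemma cfun {E' F' : Type*} [NormedAddCommGroup E'] [NormedAddCommGroup F']
    [NormedSpace ℂ E'] [NormedSpace ℂ F'] {T S : E' →L[ℂ] F'} (h : T = S) (t : E') :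
    T t = S t := by rw [h]

variable {A : E →L[ℂ] F} {Ad : F →L[ℂ] E}

lemma mp_pt1 (h : IsMPInv A Ad) (t : E) : A (Ad (A t)) = A t := by
  simpa using cfun h.1 t

lemma mp_pt2 (h : IsMPInv A Ad) (t : F) : Ad (A (Ad t)) = Ad t := by
  simpa using cfun h.2.1 t

lemma mp_pt3 (h : IsMPInv A Ad) (t : F) : adjoint Ad (adjoint A t) = A (Ad t) := by
  have := cfun h.2.2.1 t
  simpa [adjoint_comp] using this

lemma mp_pt4 (h : IsMPInv A Ad) (t : E) : adjoint A (adjoint Ad t) = Ad (A t) := by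
  have := cfun h.2.2.2 t
  simpa [adjoint_comp] using this

lemma mp_pt5 (h : IsMPInv A Ad) (t : F) : adjoint A (A (Ad t)) = adjoint A t := by
  have h' := cfun (congrArg ContinuousLinearMap.adjoint h.1) t
  simp only [adjoint_comp, comp_apply] at h'
  rwa [mp_pt3 h] at h'

lemma mp_pt6 (h : IsMPInv A Ad) (t : F) : Ad (A (adjoint A t)) = adjoint A t := by
  have h' := cfun (congrArg ContinuousLinearMap.adjoint h.1) t
  simp only [adjoint_comp, comp_apply] at h'
  rwa [mp_pt4 h] at h'

lemma mp_pt7 (h : IsMPInv A Ad) (t : F) : adjoint A (adjoint Ad (Ad t)) = Ad t := by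
  rw [mp_pt4 h, mp_pt2 h]

lemma mp_pt8 (h : IsMPInv A Ad) (t : F) : Ad (adjoint Ad (adjoint A t)) = Ad t := by
  rw [mp_pt3 h, mp_pt2 h]

lemma IsMPInv.adj (h : IsMPInv A Ad) : IsMPInv (adjoint A) (adjoint Ad) := by
  obtain ⟨h1, h2, h3, h4⟩ := h
  refine ⟨?_, ?_, ?_, ?_⟩
  · simp only [← adjoint_comp]; rw [comp_assoc, h1]
  · simp only [← adjoint_comp]; rw [comp_assoc, h2]
  · simp only [← adjoint_comp, adjoint_adjoint]; exact h4.symm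
  · simp only [← adjoint_comp, adjoint_adjoint]; exact h3.symm

lemma eq_zero_of_adj_comp {T : E →L[ℂ] F} (h : adjoint T ∘L T = 0) : T = 0 := by
  ext x
  have h1 : (adjoint T ∘L T) x = 0 := by rw [h]; rfl
  simp only [comp_apply] at h1
  have h2 : ⟪T x, T x⟫_ℂ = 0 := by
    rw [← adjoint_inner_left, h1, inner_zero_left]
  simpa [inner_self_eq_zero] using h2

lemma IsMPInv.unique {X Y : F →L[ℂ] E} (hX : IsMPInv A X) (hY : IsMPInv A Y) :
    X = Y := by
  have hax : ∀ t, A (X t) = A (Y t) := by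
    intro t
    rw [← mp_pt3 hX t]
    conv_lhs => rw [← mp_pt5 hY t]
    rw [mp_pt3 hX, mp_pt1 hX]
  have hxa : ∀ t, X (A t) = Y (A t) := by
    intro t
    rw [← mp_pt4 hX t]
    conv_lhs => rw [← mp_pt6 hY (adjoint X t)]
    rw [mp_pt4 hX, mp_pt1 hX]
  ext t
  calc X t = X (A (X t)) := (mp_pt2 hX t).symm
    _ = X (A (Y t)) := by rw [hax]
    _ = Y (A (Y t)) := hxa (Y t)
    _ = Y t := mp_pt2 hY t

end helpers

section main
variable {E F G : Type*}
  [NormedAddCommGroup E] [InnerProductSpace ℂ E] [CompleteSpace E]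
  [NormedAddCommGroup F] [InnerProductSpace ℂ F] [CompleteSpace F]
  [NormedAddCommGroup G] [InnerProductSpace ℂ G] [CompleteSpace G]
  {A : F →L[ℂ] G} {B : E →L[ℂ] F} {Ad : G →L[ℂ] F} {Bd : F →L[ℂ] E}

/-- From G1 (pointwise) deduce the commutation `K A*A = A*A K` (pointwise). -/
lemma comm_of_G1 (hA : IsMPInv A Ad) (hB : IsMPInv B Bd)
    (hG1 : ∀ x, B (Bd (adjoint A (A (B x)))) = adjoint A (A (B x))) :
    ∀ t, adjoint A (A (B (Bd t))) = B (Bd (adjoint A (A t))) := by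
  have hKM : (B ∘L Bd) ∘L ((adjoint A ∘L A) ∘L (B ∘L Bd))
      = (adjoint A ∘L A) ∘L (B ∘L Bd) := by
    ext t
    simp only [comp_apply]
    exact hG1 (Bd t)
  have h2 := congrArg ContinuousLinearMap.adjoint hKM
  intro t
  have h2t := cfun h2 t
  simp only [adjoint_comp, adjoint_adjoint, comp_apply] at h2t
  simp only [mp_pt3 hB] at h2t
  have h1t := cfun hKM t
  simp only [comp_apply] at h1t
  rw [h1t] at h2t
  exact h2t

/-- self-adjointness of `Bd ∘ P ∘ B` for `P` self-adjoint commuting with `B B*` (split pointwise form). -/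
lemma sa_conj (hB : IsMPInv B Bd) {P : F →L[ℂ] F} (hP : adjoint P = P)
    (hc : ∀ s, P (B (adjoint B s)) = B (adjoint B (P s))) :
    ∀ t, adjoint B (P (adjoint Bd t)) = Bd (P (B t)) := by
  intro t
  conv_lhs => rw [← mp_pt6 hB (P (adjoint Bd t))]
  rw [← hc, mp_pt4 hB, mp_pt1 hB]

end main

section main2
variable {E F G : Type*}
  [NormedAddCommGroup E] [InnerProductSpace ℂ E] [CompleteSpace E]
  [NormedAddCommGroup F] [InnerProductSpace ℂ F] [CompleteSpace F]
  [NormedAddCommGroup G] [InnerProductSpace ℂ G] [CompleteSpace G]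
  {A : F →L[ℂ] G} {B : E →L[ℂ] F} {Ad : G →L[ℂ] F} {Bd : F →L[ℂ] E}

/-- Forward Greville condition: if `Bd ∘ Ad` is the MP inverse of `A ∘ B` then
`B Bd A* A B = A* A B` pointwise. -/
lemma core_G1 (hA : IsMPInv A Ad) (hB : IsMPInv B Bd)
    (hX : IsMPInv (A ∘L B) (Bd ∘L Ad)) :
    ∀ x, B (Bd (adjoint A (A (B x)))) = adjoint A (A (B x)) := by
  -- pointwise consequences of the Penrose equations for A ∘ B
  have c1 : ∀ s, A (B (Bd (Ad (A (B s))))) = A (B s) := by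
    intro s
    have := cfun hX.1 s
    simpa using this
  have c3 : ∀ t, adjoint Ad (adjoint Bd (adjoint B (adjoint A t))) = A (B (Bd (Ad t))) := by
    intro t
    have := cfun hX.2.2.1 t
    simpa [adjoint_comp] using this
  have hheart : ∀ t, adjoint A (A (B (Bd (Ad t)))) = Ad (A (B (Bd (adjoint A t)))) := by
    intro t
    rw [← c3 t, mp_pt4 hA, mp_pt3 hB]
  -- the operator M = A* A B Bd
  set M : F →L[ℂ] F := adjoint A ∘L (A ∘L (B ∘L Bd)) with hM
  have hMapp : ∀ t, M t = adjoint A (A (B (Bd t))) := fun t => rfl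
  have hMadj : ∀ t, adjoint M t = B (Bd (adjoint A (A t))) := by
    intro t
    simp only [hM, adjoint_comp, adjoint_adjoint, comp_apply]
    rw [mp_pt3 hB]
  have hstar : ∀ t, Ad (A (B (Bd (M t)))) = M t := by
    intro t
    conv_rhs => rw [hMapp, ← c1 (Bd t)]
    rw [hheart (A (B (Bd t)))]
    rfl
  have hMM : ∀ t, adjoint M (M t) = adjoint M (B (Bd (M t))) := by
    intro t
    conv_lhs => rw [← hstar t]
    rw [hMadj, hMadj, mp_pt1 hA]
  have hD : (M - (B ∘L Bd) ∘L M) = 0 := by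
    apply eq_zero_of_adj_comp
    ext t
    simp only [comp_apply, sub_apply, map_sub, zero_apply, adjoint_comp]
    simp only [comp_apply, mp_pt3 hB]
    rw [mp_pt1 hB (Bd (M t)), hMM t]
    abel
  have hKM : ∀ t, B (Bd (M t)) = M t := by
    intro t
    have := cfun hD t
    simp only [sub_apply, comp_apply, zero_apply, sub_eq_zero] at this
    exact this.symm
  intro x
  have := hKM (B x)
  simp only [hMapp] at this
  rwa [mp_pt1 hB] at this

end main2

section main3
variable {E F G : Type*}
  [NormedAddCommGroup E] [InnerProductSpace ℂ E] [CompleteSpace E]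
  [NormedAddCommGroup F] [InnerProductSpace ℂ F] [CompleteSpace F]
  [NormedAddCommGroup G] [InnerProductSpace ℂ G] [CompleteSpace G]
  {A : F →L[ℂ] G} {B : E →L[ℂ] F} {Ad : G →L[ℂ] F} {Bd : F →L[ℂ] E}

lemma p1pt (hA : IsMPInv A Ad) (hB : IsMPInv B Bd)
    (hG1 : ∀ x, B (Bd (adjoint A (A (B x)))) = adjoint A (A (B x)))
    (hsaE : ∀ t, adjoint Ad (B (Bd (adjoint A t))) = A (B (Bd (Ad t)))) :
    ∀ x, A (B (Bd (Ad (A (B x))))) = A (B x) := by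
  intro x
  rw [← hsaE (A (B x)), hG1 x, mp_pt3 hA, mp_pt1 hA]

lemma range_incl (hA : IsMPInv A Ad) (hB : IsMPInv B Bd)
    (hi : ∀ s, Ad (A (B (adjoint B s))) = B (adjoint B (Ad (A s))))
    (hii : ∀ s, B (Bd (adjoint A (A s))) = adjoint A (A (B (Bd s)))) :
    LinearMap.range ((adjoint A ∘L A ∘L B ∘L adjoint B : F →L[ℂ] F) : F →ₗ[ℂ] F) ≤
      LinearMap.range ((B ∘L adjoint B ∘L adjoint A ∘L A : F →L[ℂ] F) : F →ₗ[ℂ] F) := by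
  rintro y ⟨x, rfl⟩
  refine ⟨Ad (adjoint Ad (Ad (A (adjoint Bd (Bd (adjoint A (A (B (adjoint B x))))))))), ?_⟩
  simp only [coe_coe, comp_apply]
  rw [mp_pt5 hA, mp_pt7 hA, ← hi, mp_pt4 hB, mp_pt1 hB, hii, mp_pt1 hB, mp_pt6 hA]

end main3

set_option maxHeartbeats 1000000 in
theorem stmt17 {H₁ H₂ H₃ : Type*}
    [NormedAddCommGroup H₁] [InnerProductSpace ℂ H₁] [CompleteSpace H₁]
    [NormedAddCommGroup H₂] [InnerProductSpace ℂ H₂] [CompleteSpace H₂]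
    [NormedAddCommGroup H₃] [InnerProductSpace ℂ H₃] [CompleteSpace H₃]
    (A : H₂ →L[ℂ] H₃) (B : H₁ →L[ℂ] H₂)
    (Ad : H₃ →L[ℂ] H₂) (Bd : H₂ →L[ℂ] H₁) (ABd : H₃ →L[ℂ] H₁)
    (hAcl : IsClosed (LinearMap.range (A : H₂ →ₗ[ℂ] H₃) : Set H₃))
    (hBcl : IsClosed (LinearMap.range (B : H₁ →ₗ[ℂ] H₂) : Set H₂))
    (hABcl : IsClosed (LinearMap.range ((A ∘L B : H₁ →L[ℂ] H₃) : H₁ →ₗ[ℂ] H₃) : Set H₃))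
    (hA : IsMPInv A Ad) (hB : IsMPInv B Bd) (hAB : IsMPInv (A ∘L B) ABd) :
    ABd = Bd ∘L Ad ↔
      LinearMap.range ((ContinuousLinearMap.adjoint A ∘L A ∘L B ∘L ContinuousLinearMap.adjoint B : H₂ →L[ℂ] H₂) : H₂ →ₗ[ℂ] H₂) =
        LinearMap.range ((B ∘L ContinuousLinearMap.adjoint B ∘L ContinuousLinearMap.adjoint A ∘L A : H₂ →L[ℂ] H₂) : H₂ →ₗ[ℂ] H₂) := by
  constructor
  · intro h
    rw [h] at hAB
    have hXadj : IsMPInv (adjoint B ∘L adjoint A) (adjoint Ad ∘L adjoint Bd) := by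
      have := hAB.adj
      simpa [adjoint_comp] using this
    have G1 := core_G1 hA hB hAB
    have G2big := core_G1 hB.adj hA.adj hXadj
    have hii : ∀ s, B (Bd (adjoint A (A s))) = adjoint A (A (B (Bd s))) :=
      fun s => (comm_of_G1 hA hB G1 s).symm
    have hi0 := comm_of_G1 hB.adj hA.adj G2big
    simp only [adjoint_adjoint, mp_pt4 hA] at hi0
    have hi : ∀ s, Ad (A (B (adjoint B s))) = B (adjoint B (Ad (A s))) :=
      fun s => (hi0 s).symm
    refine le_antisymm (range_incl hA hB hi hii) ?_
    have h2 := range_incl hB.adj hA.adj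
      (fun s => by simp only [adjoint_adjoint, mp_pt3 hB]; exact hii s)
      (fun s => by simp only [adjoint_adjoint, mp_pt4 hA]; exact hi s)
    simpa only [adjoint_adjoint] using h2
  · intro hR
    have G1 : ∀ x, B (Bd (adjoint A (A (B x)))) = adjoint A (A (B x)) := by
      intro x
      have hmem : adjoint A (A (B x)) ∈
          LinearMap.range ((B ∘L adjoint B ∘L adjoint A ∘L A : H₂ →L[ℂ] H₂) : H₂ →ₗ[ℂ] H₂) := by
        rw [← hR]
        refine ⟨adjoint Bd x, ?_⟩
        simp only [coe_coe, comp_apply]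
        rw [mp_pt4 hB, mp_pt1 hB]
      obtain ⟨z, hz⟩ := hmem
      simp only [coe_coe, comp_apply] at hz
      rw [← hz, mp_pt1 hB]
    have G2 : ∀ x, Ad (A (B (adjoint B (adjoint A x)))) = B (adjoint B (adjoint A x)) := by
      intro x
      have hmem : B (adjoint B (adjoint A x)) ∈
          LinearMap.range ((adjoint A ∘L A ∘L B ∘L adjoint B : H₂ →L[ℂ] H₂) : H₂ →ₗ[ℂ] H₂) := by
        rw [hR]
        refine ⟨Ad x, ?_⟩
        simp only [coe_coe, comp_apply]
        rw [mp_pt5 hA]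
      obtain ⟨z, hz⟩ := hmem
      simp only [coe_coe, comp_apply] at hz
      rw [← hz, mp_pt6 hA]
    have G2big : ∀ x : H₃, adjoint A (adjoint Ad (adjoint (adjoint B) (adjoint B (adjoint A x))))
        = adjoint (adjoint B) (adjoint B (adjoint A x)) := by
      intro x
      simp only [adjoint_adjoint]
      rw [mp_pt4 hA]
      exact G2 x
    have hii : ∀ s, B (Bd (adjoint A (A s))) = adjoint A (A (B (Bd s))) :=
      fun s => (comm_of_G1 hA hB G1 s).symm
    have hi0 := comm_of_G1 hB.adj hA.adj G2big
    simp only [adjoint_adjoint, mp_pt4 hA] at hi0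
    have hi : ∀ s, Ad (A (B (adjoint B s))) = B (adjoint B (Ad (A s))) :=
      fun s => (hi0 s).symm
    -- self-adjointness of Bd (Ad A) B  (split form)
    have sc4 : ∀ t, adjoint B (Ad (A (adjoint Bd t))) = Bd (Ad (A (B t))) := by
      intro t
      have := sa_conj hB (P := Ad ∘L A) hA.2.2.2
        (fun s => by simp only [comp_apply]; exact hi s) t
      simpa only [comp_apply] using this
    have saEpt : ∀ t, adjoint Ad (B (Bd (adjoint A t))) = A (B (Bd (Ad t))) := by
      intro t
      have := sa_conj hA.adj (P := B ∘L Bd) hB.2.2.1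
        (fun s => by simp only [comp_apply, adjoint_adjoint]; exact hii s) t
      simp only [comp_apply, adjoint_adjoint] at this
      exact this.symm
    -- mirror versions
    have saEpt' : ∀ t, Bd (adjoint A (adjoint Ad (B t)))
        = adjoint B (adjoint A (adjoint Ad (adjoint Bd t))) := by
      intro t
      rw [mp_pt4 hA, mp_pt4 hA]
      exact (sc4 t).symm
    have p1' := p1pt hB.adj hA.adj G2big
      (fun t => by simpa only [adjoint_adjoint] using saEpt' t)
    have P1op : (A ∘L B) ∘L (Bd ∘L Ad) ∘L (A ∘L B) = A ∘L B := by
      ext x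
      simp only [comp_apply]
      rw [← saEpt (A (B x)), G1 x, mp_pt3 hA, mp_pt1 hA]
    have P2op : (Bd ∘L Ad) ∘L (A ∘L B) ∘L (Bd ∘L Ad) = Bd ∘L Ad := by
      ext x
      simp only [comp_apply]
      conv_lhs => rw [← mp_pt8 hB (Ad (A (B (Bd (Ad x)))))]
      rw [← mp_pt4 hA]
      rw [← mp_pt3 hB]
      conv_lhs => rw [← mp_pt7 hA x]
      rw [p1' (adjoint Ad (Ad x))]
      rw [mp_pt7 hA, mp_pt8 hB]
    have P3op : adjoint ((A ∘L B) ∘L (Bd ∘L Ad)) = (A ∘L B) ∘L (Bd ∘L Ad) := by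
      ext t
      simp only [adjoint_comp, comp_apply]
      rw [mp_pt3 hB, saEpt]
    have P4op : adjoint ((Bd ∘L Ad) ∘L (A ∘L B)) = (Bd ∘L Ad) ∘L (A ∘L B) := by
      ext t
      simp only [adjoint_comp, comp_apply]
      rw [mp_pt4 hA, sc4]
    exact hAB.unique ⟨P1op, P2op, P3op, P4op⟩
end

section
/- Let A ∈ B(H₂, H₃) and B ∈ B(H₁, H₂) have closed ranges and suppose AB has closed range. Then (AB)† = B† A† if and only if A A* (B* A*)† B* B = A B. -/
open ContinuousLinearMap

section Helpers

variable {E F : Type*} [NormedAddCommGroup E] [InnerProductSpace ℂ E] [CompleteSpace E]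
  [NormedAddCommGroup F] [InnerProductSpace ℂ F] [CompleteSpace F]

lemma mp_adjoint (T : E →L[ℂ] F) (S : F →L[ℂ] E) (h : IsMPInv T S) :
    IsMPInv (ContinuousLinearMap.adjoint T) (ContinuousLinearMap.adjoint S) := by
  obtain ⟨h1, h2, h3, h4⟩ := h
  refine ⟨?_, ?_, ?_, ?_⟩
  · rw [← comp_assoc, ← adjoint_comp, ← adjoint_comp, h1]
  · rw [← comp_assoc, ← adjoint_comp, ← adjoint_comp, h2]
  · rw [← adjoint_comp, adjoint_adjoint, h4]
  · rw [← adjoint_comp, adjoint_adjoint, h3]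

lemma mp_G1 (T : E →L[ℂ] F) (S : F →L[ℂ] E) (h : IsMPInv T S) :
    ContinuousLinearMap.adjoint T ∘L T ∘L S = ContinuousLinearMap.adjoint T := by
  rw [← h.2.2.1, ← adjoint_comp, comp_assoc, h.1]

lemma mp_G2 (T : E →L[ℂ] F) (S : F →L[ℂ] E) (h : IsMPInv T S) :
    S ∘L T ∘L ContinuousLinearMap.adjoint T = ContinuousLinearMap.adjoint T := by
  rw [← comp_assoc, ← h.2.2.2, ← adjoint_comp, h.1]

lemma mp_G3 (T : E →L[ℂ] F) (S : F →L[ℂ] E) (h : IsMPInv T S) :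
    T ∘L ContinuousLinearMap.adjoint T ∘L ContinuousLinearMap.adjoint S = T := by
  rw [← adjoint_comp, h.2.2.2, h.1]

lemma mp_G4 (T : E →L[ℂ] F) (S : F →L[ℂ] E) (h : IsMPInv T S) :
    ContinuousLinearMap.adjoint S ∘L ContinuousLinearMap.adjoint T ∘L T = T := by
  rw [← comp_assoc, ← adjoint_comp, h.2.2.1, comp_assoc, h.1]

lemma mp_G5 (T : E →L[ℂ] F) (S : F →L[ℂ] E) (h : IsMPInv T S) :
    ContinuousLinearMap.adjoint T ∘L ContinuousLinearMap.adjoint S ∘L S = S := by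
  rw [← comp_assoc, ← adjoint_comp, h.2.2.2, comp_assoc, h.2.1]

lemma mp_G6 (T : E →L[ℂ] F) (S : F →L[ℂ] E) (h : IsMPInv T S) :
    S ∘L ContinuousLinearMap.adjoint S ∘L ContinuousLinearMap.adjoint T = S := by
  rw [← adjoint_comp, h.2.2.1, h.2.1]

lemma mp_unique_s18 (T : E →L[ℂ] F) (S₁ S₂ : F →L[ℂ] E)
    (h1 : IsMPInv T S₁) (h2 : IsMPInv T S₂) : S₁ = S₂ := by
  have hTS : T ∘L S₁ = T ∘L S₂ := by
    calc T ∘L S₁ = ContinuousLinearMap.adjoint (T ∘L S₁) := h1.2.2.1.symm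
      _ = ContinuousLinearMap.adjoint S₁ ∘L ContinuousLinearMap.adjoint T := adjoint_comp _ _
      _ = ContinuousLinearMap.adjoint S₁ ∘L
          (ContinuousLinearMap.adjoint T ∘L (T ∘L S₂)) := by
          conv_lhs => rw [← mp_G1 T S₂ h2]
      _ = (ContinuousLinearMap.adjoint S₁ ∘L ContinuousLinearMap.adjoint T) ∘L (T ∘L S₂) := by
          rw [← comp_assoc]
      _ = ContinuousLinearMap.adjoint (T ∘L S₁) ∘L (T ∘L S₂) := by rw [← adjoint_comp]
      _ = (T ∘L S₁) ∘L (T ∘L S₂) := by rw [h1.2.2.1]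
      _ = T ∘L ((S₁ ∘L T) ∘L S₂) := by rw [comp_assoc, ← comp_assoc S₁ T S₂]
      _ = T ∘L S₂ := by rw [← comp_assoc T (S₁ ∘L T) S₂, h1.1]
  have hST : S₁ ∘L T = S₂ ∘L T := by
    calc S₁ ∘L T = ContinuousLinearMap.adjoint (S₁ ∘L T) := h1.2.2.2.symm
      _ = ContinuousLinearMap.adjoint T ∘L ContinuousLinearMap.adjoint S₁ := adjoint_comp _ _
      _ = (S₂ ∘L (T ∘L ContinuousLinearMap.adjoint T)) ∘L ContinuousLinearMap.adjoint S₁ := by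
          conv_lhs => rw [← mp_G2 T S₂ h2]
      _ = S₂ ∘L (T ∘L (ContinuousLinearMap.adjoint T ∘L ContinuousLinearMap.adjoint S₁)) := by
          rw [comp_assoc, comp_assoc]
      _ = S₂ ∘L (T ∘L ContinuousLinearMap.adjoint (S₁ ∘L T)) := by rw [← adjoint_comp]
      _ = S₂ ∘L (T ∘L (S₁ ∘L T)) := by rw [h1.2.2.2]
      _ = S₂ ∘L T := by rw [h1.1]
  calc S₁ = S₁ ∘L (T ∘L S₁) := h1.2.1.symm
    _ = S₁ ∘L (T ∘L S₂) := by rw [hTS]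
    _ = (S₁ ∘L T) ∘L S₂ := by rw [← comp_assoc]
    _ = (S₂ ∘L T) ∘L S₂ := by rw [hST]
    _ = S₂ ∘L (T ∘L S₂) := by rw [comp_assoc]
    _ = S₂ := h2.2.1

end Helpers

theorem stmt18 {H₁ H₂ H₃ : Type*}
    [NormedAddCommGroup H₁] [InnerProductSpace ℂ H₁] [CompleteSpace H₁]
    [NormedAddCommGroup H₂] [InnerProductSpace ℂ H₂] [CompleteSpace H₂]
    [NormedAddCommGroup H₃] [InnerProductSpace ℂ H₃] [CompleteSpace H₃]
    (A : H₂ →L[ℂ] H₃) (B : H₁ →L[ℂ] H₂)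
    (Ad : H₃ →L[ℂ] H₂) (Bd : H₂ →L[ℂ] H₁) (ABd : H₃ →L[ℂ] H₁)
    (hAcl : IsClosed (LinearMap.range (A : H₂ →ₗ[ℂ] H₃) : Set H₃))
    (hBcl : IsClosed (LinearMap.range (B : H₁ →ₗ[ℂ] H₂) : Set H₂))
    (hABcl : IsClosed (LinearMap.range ((A ∘L B : H₁ →L[ℂ] H₃) : H₁ →ₗ[ℂ] H₃) : Set H₃))
    (hA : IsMPInv A Ad) (hB : IsMPInv B Bd) (hAB : IsMPInv (A ∘L B) ABd)
    (X : H₁ →L[ℂ] H₃) (hX : IsMPInv (ContinuousLinearMap.adjoint B ∘L ContinuousLinearMap.adjoint A) X) :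
    ABd = Bd ∘L Ad ↔ A ∘L ContinuousLinearMap.adjoint A ∘L X ∘L ContinuousLinearMap.adjoint B ∘L B = A ∘L B := by
  have hX' : X = ContinuousLinearMap.adjoint ABd := by
    refine mp_unique_s18 _ _ _ hX ?_
    have h := mp_adjoint _ _ hAB
    rwa [adjoint_comp] at h
  -- pointwise facts
  have pa1 : ∀ x, A (Ad (A x)) = A x := fun x => by
    have := DFunLike.congr_fun hA.1 x; simpa only [comp_apply] using this
  have pa2 : ∀ x, Ad (A (Ad x)) = Ad x := fun x => by
    have := DFunLike.congr_fun hA.2.1 x; simpa only [comp_apply] using this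
  have pb2 : ∀ x, Bd (B (Bd x)) = Bd x := fun x => by
    have := DFunLike.congr_fun hB.2.1 x; simpa only [comp_apply] using this
  have psa2 : ∀ x, ContinuousLinearMap.adjoint A (ContinuousLinearMap.adjoint Ad x)
      = Ad (A x) := fun x => by
    have h : ContinuousLinearMap.adjoint A ∘L ContinuousLinearMap.adjoint Ad = Ad ∘L A := by
      rw [← adjoint_comp]; exact hA.2.2.2
    have := DFunLike.congr_fun h x; simpa only [comp_apply] using this
  have psb1 : ∀ x, ContinuousLinearMap.adjoint Bd (ContinuousLinearMap.adjoint B x)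
      = B (Bd x) := fun x => by
    have h : ContinuousLinearMap.adjoint Bd ∘L ContinuousLinearMap.adjoint B = B ∘L Bd := by
      rw [← adjoint_comp]; exact hB.2.2.1
    have := DFunLike.congr_fun h x; simpa only [comp_apply] using this
  have pG1A : ∀ x, ContinuousLinearMap.adjoint A (A (Ad x))
      = ContinuousLinearMap.adjoint A x := fun x => by
    have := DFunLike.congr_fun (mp_G1 A Ad hA) x; simpa only [comp_apply] using this
  have pG2B : ∀ x, Bd (B (ContinuousLinearMap.adjoint B x))
      = ContinuousLinearMap.adjoint B x := fun x => by
    have := DFunLike.congr_fun (mp_G2 B Bd hB) x; simpa only [comp_apply] using this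
  have pG3A : ∀ x, A (ContinuousLinearMap.adjoint A (ContinuousLinearMap.adjoint Ad x))
      = A x := fun x => by
    have := DFunLike.congr_fun (mp_G3 A Ad hA) x; simpa only [comp_apply] using this
  have pG4B : ∀ x, ContinuousLinearMap.adjoint Bd (ContinuousLinearMap.adjoint B (B x))
      = B x := fun x => by
    have := DFunLike.congr_fun (mp_G4 B Bd hB) x; simpa only [comp_apply] using this
  have pG5M : ∀ x, ContinuousLinearMap.adjoint B (ContinuousLinearMap.adjoint A
      (ContinuousLinearMap.adjoint ABd (ABd x))) = ABd x := fun x => by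
    have h := mp_G5 (A ∘L B) ABd hAB
    rw [adjoint_comp] at h
    have := DFunLike.congr_fun h x; simpa only [comp_apply] using this
  have pG6M : ∀ x, ABd (ContinuousLinearMap.adjoint ABd (ContinuousLinearMap.adjoint B
      (ContinuousLinearMap.adjoint A x))) = ABd x := fun x => by
    have h := mp_G6 (A ∘L B) ABd hAB
    rw [adjoint_comp] at h
    have := DFunLike.congr_fun h x; simpa only [comp_apply] using this
  constructor
  · intro h
    rw [hX', h, adjoint_comp]
    ext x
    simp only [comp_apply]
    rw [pG4B, pG3A]
  · intro hcond
    rw [hX'] at hcond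
    have he := congrArg ContinuousLinearMap.adjoint hcond
    simp only [adjoint_comp, adjoint_adjoint] at he
    have pe1 : ∀ x, ContinuousLinearMap.adjoint B (B (ABd (A (ContinuousLinearMap.adjoint A x))))
        = ContinuousLinearMap.adjoint B (ContinuousLinearMap.adjoint A x) := fun x => by
      have := DFunLike.congr_fun he x; simpa only [comp_apply] using this
    have pe2 : ∀ x, B (ABd (A (ContinuousLinearMap.adjoint A x)))
        = B (Bd (ContinuousLinearMap.adjoint A x)) := fun x =>
      ((pG4B (ABd (A (ContinuousLinearMap.adjoint A x)))).symm.trans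
        (congrArg (fun y => ContinuousLinearMap.adjoint Bd y) (pe1 x))).trans
        (psb1 (ContinuousLinearMap.adjoint A x))
    have pe3 : ∀ x, B (ABd (A x)) = B (Bd (Ad (A x))) := fun x =>
      ((congrArg (fun y => B (ABd y)) (pa1 x).symm).trans
        (congrArg (fun y => B (ABd (A y))) (psa2 x).symm)).trans
        ((pe2 (ContinuousLinearMap.adjoint Ad x)).trans
          (congrArg (fun y => B (Bd y)) (psa2 x)))
    have pBBD : ∀ x, Bd (B (ABd x)) = ABd x := fun x =>
      ((congrArg (fun y => Bd (B y)) (pG5M x).symm).trans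
        (pG2B (ContinuousLinearMap.adjoint A (ContinuousLinearMap.adjoint ABd (ABd x))))).trans
        (pG5M x)
    have pDAA : ∀ x, ABd (A (Ad x)) = ABd x := fun x =>
      ((pG6M (A (Ad x))).symm.trans
        (congrArg (fun y => ABd (ContinuousLinearMap.adjoint ABd
          (ContinuousLinearMap.adjoint B y))) (pG1A x))).trans (pG6M x)
    have pe4 : ∀ x, ABd (A x) = Bd (Ad (A x)) := fun x =>
      ((pBBD (A x)).symm.trans (congrArg (fun y => Bd y) (pe3 x))).trans (pb2 (Ad (A x)))
    ext x
    have key : ABd x = Bd (Ad x) :=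
      ((pDAA x).symm.trans (pe4 (Ad x))).trans (congrArg (fun y => Bd y) (pa2 x))
    simpa only [comp_apply] using key
end
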